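/- arXiv:2110.09732 — 8 statements merged into one kernel-verified Lean document; each statement's English description precedes it below -/
import Mathlib

section
/- For any graph G and any induced subgraph H of G, the eternal domination number of G is at least the eternal domination number of H. -/
open SimpleGraph

variable {V : Type*}

/-- `D` is a dominating set of `G`. -/
def IsDomSet (G : SimpleGraph V) (D : Finset V) : Prop :=
  ∀ v : V, ∃ u ∈ D, u = v ∨ G.Adj u v

/-- A family of guard configurations closed under defending any attack: every member
of the family is a dominating set, and for every attack on an unguarded vertex `v`
some guard on a neighbour of `v` can move to `v` so that the resulting configuration
is again in the family.  The defender can perpetually defend every infinite sequence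
of attacks starting from `D` iff `D` belongs to such a family. -/
def IsEDFamily [DecidableEq V] (G : SimpleGraph V) (F : Set (Finset V)) : Prop :=
  ∀ D ∈ F, IsDomSet G D ∧
    ∀ v ∉ D, ∃ u ∈ D, G.Adj u v ∧ insert v (D.erase u) ∈ F

/-- The eternal domination number `γ∞(G)`: the least number of guards admitting a
winning defence strategy. -/
noncomputable def eternalDomNum [DecidableEq V] (G : SimpleGraph V) : ℕ :=
  sInf {k | ∃ F : Set (Finset V), F.Nonempty ∧ (∀ D ∈ F, D.card = k) ∧ IsEDFamily G F}

/-- The independence number `α(G)`. -/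
noncomputable def indepNum (G : SimpleGraph V) : ℕ :=
  sSup {k | ∃ s : Finset V, s.card = k ∧ ∀ u ∈ s, ∀ v ∈ s, ¬ G.Adj u v}

/-- The clique covering number `θ(G)`: the least `k` such that the vertex set can be
partitioned into `k` cliques, i.e. the complement of `G` is properly `k`-colourable. -/
noncomputable def cliqueCoverNum (G : SimpleGraph V) : ℕ :=
  sInf {k | Nonempty (Gᶜ.Coloring (Fin k))}

/-- The domination number `γ(G)`. -/
noncomputable def domNum (G : SimpleGraph V) : ℕ :=
  sInf {k | ∃ D : Finset V, D.card = k ∧ IsDomSet G D}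

/-- For any graph `G` and any induced subgraph `H` of `G` (induced on a vertex
subset `s`), the eternal domination number of `G` is at least that of `H`. -/
theorem eternalDomNum_induce_le {V : Type*} [Fintype V] [DecidableEq V]
    (G : SimpleGraph V) (s : Set V) :
    eternalDomNum (G.induce s) ≤ eternalDomNum G := by
  classical
  set k := eternalDomNum G with hk
  -- the defining set for G is nonempty, so k is attained
  have hSG : k ∈ {k | ∃ F : Set (Finset V), F.Nonempty ∧ (∀ D ∈ F, D.card = k) ∧ IsEDFamily G F} := by
    apply Nat.sInf_mem
    refine ⟨Fintype.card V, {Finset.univ}, ⟨Finset.univ, rfl⟩, by simp, ?_⟩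
    intro D hD
    rw [Set.mem_singleton_iff] at hD; subst hD
    exact ⟨fun v => ⟨v, Finset.mem_univ v, Or.inl rfl⟩,
      fun v hv => absurd (Finset.mem_univ v) hv⟩
  obtain ⟨F, ⟨D₀, hD₀⟩, hcard, hED⟩ := hSG
  -- m = max over D ∈ F of |D ∩ s|
  set T : Set ℕ := {n | ∃ D ∈ F, (D.filter (· ∈ s)).card = n} with hT
  have hbdd : BddAbove T := by
    refine ⟨k, ?_⟩
    rintro n ⟨D, hD, rfl⟩
    exact le_trans (Finset.card_filter_le _ _) (le_of_eq (hcard D hD))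
  have hmT : sSup T ∈ T := Nat.sSup_mem ⟨_, D₀, hD₀, rfl⟩ hbdd
  set m := sSup T with hm
  obtain ⟨D₁, hD₁F, hD₁m⟩ := hmT
  have hmax : ∀ D ∈ F, (D.filter (· ∈ s)).card ≤ m := fun D hD => le_csSup hbdd ⟨D, hD, rfl⟩
  -- key: from a max-intersection config, any attack in s is answered from within s
  have key : ∀ D ∈ F, (D.filter (· ∈ s)).card = m → ∀ v ∈ s, v ∉ D →
      ∀ u ∈ D, G.Adj u v → insert v (D.erase u) ∈ F → u ∈ s := by
    intro D hDF hDm v hvs hvD u huD hadj hins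
    by_contra hus
    have hcalc : ((insert v (D.erase u)).filter (· ∈ s)).card = m + 1 := by
      rw [Finset.filter_insert, if_pos hvs, Finset.filter_erase,
        Finset.erase_eq_of_notMem (by simp [hus]), Finset.card_insert_of_notMem
        (fun h => hvD (Finset.mem_of_mem_filter v h)), hDm]
    have := hmax _ hins
    omega
  -- the family for the induced subgraph
  set 𝒢 : Set (Finset ↥s) :=
    {C | ∃ D ∈ F, (D.filter (· ∈ s)).card = m ∧ C = D.subtype (· ∈ s)} with h𝒢
  have hsub_card : ∀ D : Finset V, (D.subtype (· ∈ s)).card = (D.filter (· ∈ s)).card :=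
    fun D => Finset.card_subtype _ _
  have hmem : m ∈ {j | ∃ F' : Set (Finset ↥s), F'.Nonempty ∧ (∀ C ∈ F', C.card = j) ∧
      IsEDFamily (G.induce s) F'} := by
    refine ⟨𝒢, ⟨D₁.subtype (· ∈ s), D₁, hD₁F, hD₁m, rfl⟩, ?_, ?_⟩
    · rintro C ⟨D, hDF, hDm, rfl⟩
      rw [hsub_card, hDm]
    · rintro C ⟨D, hDF, hDm, rfl⟩
      have hvD_of : ∀ a : ↥s, a ∈ D.subtype (· ∈ s) ↔ (a : V) ∈ D := by
        intro a; simp [Finset.mem_subtype]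
      constructor
      · -- dominating
        rintro ⟨v, hvs⟩
        by_cases hvD : v ∈ D
        · exact ⟨⟨v, hvs⟩, (hvD_of _).2 hvD, Or.inl rfl⟩
        · obtain ⟨u, huD, hadj, hins⟩ := (hED D hDF).2 v hvD
          have hus : u ∈ s := key D hDF hDm v hvs hvD u huD hadj hins
          refine ⟨⟨u, hus⟩, (hvD_of _).2 huD, Or.inr ?_⟩
          exact hadj
      · -- responses
        rintro ⟨v, hvs⟩ hvC
        have hvD : v ∉ D := fun h => hvC ((hvD_of _).2 h)
        obtain ⟨u, huD, hadj, hins⟩ := (hED D hDF).2 v hvD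
        have hus : u ∈ s := key D hDF hDm v hvs hvD u huD hadj hins
        refine ⟨⟨u, hus⟩, (hvD_of _).2 huD, hadj, ?_⟩
        refine ⟨insert v (D.erase u), hins, ?_, ?_⟩
        · rw [Finset.filter_insert, if_pos hvs, Finset.filter_erase,
            Finset.card_insert_of_notMem (by simp [hvD]),
            Finset.card_erase_of_mem (Finset.mem_filter.2 ⟨huD, hus⟩), hDm]
          have : 0 < m := hDm ▸ Finset.card_pos.2 ⟨u, Finset.mem_filter.2 ⟨huD, hus⟩⟩
          omega
        · ext a
          simp only [Finset.mem_subtype, Finset.mem_insert, Finset.mem_erase, ne_eq, Subtype.ext_iff]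
  calc eternalDomNum (G.induce s) ≤ m := Nat.sInf_le hmem
    _ ≤ k := by rw [← hD₁m]; exact le_trans (Finset.card_filter_le _ _) (le_of_eq (hcard D₁ hD₁F))
end

section
/- For any finite graph G, the independence number of G is at most the eternal domination number of G, which in turn is at most the clique covering number of G. -/
open SimpleGraph

variable {V : Type*}

/-- Auxiliary: a defender can reach a configuration covering any independent set. -/
lemma EDFamily.exists_superset {V : Type*} [Fintype V] [DecidableEq V] {G : SimpleGraph V}
    (A : Finset V) (hA : ∀ u ∈ A, ∀ v ∈ A, ¬ G.Adj u v)
    (F : Set (Finset V)) (hF : IsEDFamily G F) :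
    ∀ n (D : Finset V), D ∈ F → (A \ D).card ≤ n → ∃ D' ∈ F, A ⊆ D' := by
  intro n
  induction n with
  | zero =>
    intro D hD h
    refine ⟨D, hD, ?_⟩
    have : A \ D = ∅ := Finset.card_eq_zero.mp (Nat.le_zero.mp h)
    intro a ha
    by_contra h'
    have ha' : a ∈ A \ D := Finset.mem_sdiff.mpr ⟨ha, h'⟩
    rw [this] at ha'
    exact absurd ha' (Finset.notMem_empty a)
  | succ n ih =>
    intro D hD hcard
    by_cases hsub : A ⊆ D
    · exact ⟨D, hD, hsub⟩
    · obtain ⟨v, hvA, hvD⟩ := Finset.not_subset.mp hsub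
      obtain ⟨u, huD, hadj, hmem⟩ := (hF D hD).2 v hvD
      refine ih (insert v (D.erase u)) hmem ?_
      have husub : A \ insert v (D.erase u) ⊆ (A \ D).erase v := by
        intro w hw
        rw [Finset.mem_sdiff, Finset.mem_insert] at hw
        obtain ⟨hwA, hw2⟩ := hw
        push_neg at hw2
        obtain ⟨hwv, hwE⟩ := hw2
        rw [Finset.mem_erase] at hwE
        push_neg at hwE
        have hwu : w ≠ u := by
          rintro rfl
          exact hA w hwA v hvA hadj
        exact Finset.mem_erase.mpr ⟨hwv, Finset.mem_sdiff.mpr ⟨hwA, hwE hwu⟩⟩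
      calc (A \ insert v (D.erase u)).card ≤ ((A \ D).erase v).card :=
            Finset.card_le_card husub
        _ = (A \ D).card - 1 :=
            Finset.card_erase_of_mem (Finset.mem_sdiff.mpr ⟨hvA, hvD⟩)
        _ ≤ n := by omega

/-- For any finite graph `G`, `α(G) ≤ γ∞(G) ≤ θ(G)`. -/
theorem indepNum_le_eternalDomNum_le_cliqueCoverNum {V : Type*} [Fintype V] [DecidableEq V]
    (G : SimpleGraph V) :
    _root_.indepNum G ≤ eternalDomNum G ∧ eternalDomNum G ≤ cliqueCoverNum G := by
  classical
  -- The complement graph is colourable with `Fintype.card V` colours.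
  have hcolne : {k | Nonempty (Gᶜ.Coloring (Fin k))}.Nonempty :=
    ⟨Fintype.card V, Gᶜ.colorable_of_fintype⟩
  obtain ⟨C⟩ : Nonempty (Gᶜ.Coloring (Fin (cliqueCoverNum G))) := Nat.sInf_mem hcolne
  -- the used colours
  set T : Finset (Fin (cliqueCoverNum G)) := Finset.univ.image C with hT
  -- the candidate eternal-domination family
  set F : Set (Finset V) :=
    {D : Finset V | D.card = T.card ∧ ∀ v ∈ D, ∀ w ∈ D, C v = C w → v = w} with hFdef
  -- every member of F hits every used colour
  have hhit : ∀ D ∈ F, ∀ v : V, ∃ u ∈ D, C u = C v := by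
    intro D hD v
    obtain ⟨hcard, hinj⟩ := hD
    have himg : D.image C = T := by
      apply Finset.eq_of_subset_of_card_le
      · intro c hc
        rw [hT]
        simp only [Finset.mem_image] at hc ⊢
        obtain ⟨w, hw, rfl⟩ := hc
        exact ⟨w, Finset.mem_univ w, rfl⟩
      · rw [Finset.card_image_of_injOn (fun a ha b hb h => hinj a ha b hb h), hcard]
    have : C v ∈ D.image C := by
      rw [himg, hT]
      exact Finset.mem_image_of_mem C (Finset.mem_univ v)
    obtain ⟨u, hu, huv⟩ := Finset.mem_image.mp this
    exact ⟨u, hu, huv⟩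
  -- same colour means equal or adjacent in G
  have hsame : ∀ u v : V, C u = C v → u = v ∨ G.Adj u v := by
    intro u v h
    by_cases huv : u = v
    · exact Or.inl huv
    · right
      by_contra hadj
      exact C.valid ((G.compl_adj u v).mpr ⟨huv, hadj⟩) h
  have hF : IsEDFamily G F := by
    intro D hD
    constructor
    · intro v
      obtain ⟨u, hu, huv⟩ := hhit D hD v
      exact ⟨u, hu, hsame u v huv⟩
    · intro v hv
      obtain ⟨u, hu, huv⟩ := hhit D hD v
      have huvne : u ≠ v := fun h => hv (h ▸ hu)
      have hadj : G.Adj u v := (hsame u v huv).resolve_left huvne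
      refine ⟨u, hu, hadj, ?_, ?_⟩
      · have hvD' : v ∉ D.erase u := fun h => hv (Finset.mem_of_mem_erase h)
        rw [Finset.card_insert_of_notMem hvD', Finset.card_erase_of_mem hu, hD.1]
        have : 0 < T.card := by
          rw [← hD.1]; exact Finset.card_pos.mpr ⟨u, hu⟩
        omega
      · intro a ha b hb hab
        rw [Finset.mem_insert] at ha hb
        rcases ha with rfl | ha <;> rcases hb with rfl | hb
        · rfl
        · exfalso
          rw [Finset.mem_erase] at hb
          exact hb.1 (hD.2 b hb.2 u hu (hab.symm.trans huv.symm))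
        · exfalso
          rw [Finset.mem_erase] at ha
          exact ha.1 (hD.2 a ha.2 u hu (hab.trans huv.symm))
        · exact hD.2 a (Finset.mem_of_mem_erase ha) b (Finset.mem_of_mem_erase hb) hab
  -- F is nonempty
  have hFne : F.Nonempty := by
    have hex : ∀ c ∈ T, ∃ v : V, C v = c := by
      intro c hc
      simp only [hT, Finset.mem_image] at hc
      obtain ⟨v, _, hv⟩ := hc
      exact ⟨v, hv⟩
    refine ⟨T.attach.image (fun c => Classical.choose (hex c.1 c.2)), ?_, ?_⟩
    · have hinj : Function.Injective (fun c : {x // x ∈ T} => Classical.choose (hex c.1 c.2)) := by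
        intro a b hab
        have ha := Classical.choose_spec (hex a.1 a.2)
        have hb := Classical.choose_spec (hex b.1 b.2)
        apply Subtype.ext
        rw [← ha, ← hb]
        exact congrArg C hab
      rw [Finset.card_image_of_injective _ hinj, Finset.card_attach]
    · intro v hvm w hwm hvw
      simp only [Finset.mem_image] at hvm hwm
      obtain ⟨a, _, rfl⟩ := hvm
      obtain ⟨b, _, rfl⟩ := hwm
      have ha := Classical.choose_spec (hex a.1 a.2)
      have hb := Classical.choose_spec (hex b.1 b.2)
      have : a.1 = b.1 := by rw [← ha, ← hb]; exact hvw
      rw [Subtype.ext this]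
  -- T.card is an achievable number of guards
  have hmem : T.card ∈
      {k | ∃ F : Set (Finset V), F.Nonempty ∧ (∀ D ∈ F, D.card = k) ∧ IsEDFamily G F} :=
    ⟨F, hFne, fun D hD => hD.1, hF⟩
  -- α ≤ every achievable number of guards
  have halpha : ∀ k ∈
      {k | ∃ F : Set (Finset V), F.Nonempty ∧ (∀ D ∈ F, D.card = k) ∧ IsEDFamily G F},
      _root_.indepNum G ≤ k := by
    rintro k ⟨F', ⟨D0, hD0⟩, hcards, hF'⟩
    have hbdd : BddAbove {k | ∃ s : Finset V, s.card = k ∧ ∀ u ∈ s, ∀ v ∈ s, ¬ G.Adj u v} := by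
      refine ⟨Fintype.card V, ?_⟩
      rintro n ⟨s, rfl, -⟩
      exact Finset.card_le_card (Finset.subset_univ s) |>.trans (le_of_eq (Finset.card_univ))
    have hne : {k | ∃ s : Finset V, s.card = k ∧ ∀ u ∈ s, ∀ v ∈ s, ¬ G.Adj u v}.Nonempty :=
      ⟨0, ∅, Finset.card_empty, by simp⟩
    obtain ⟨A, hAcard, hAind⟩ := Nat.sSup_mem hne hbdd
    obtain ⟨D', hD', hsub⟩ :=
      EDFamily.exists_superset A hAind F' hF' (A \ D0).card D0 hD0 le_rfl
    rw [_root_.indepNum, ← hAcard, ← hcards D' hD']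
    exact Finset.card_le_card hsub
  constructor
  · exact halpha _ (Nat.sInf_mem ⟨T.card, hmem⟩)
  · calc eternalDomNum G ≤ T.card := Nat.sInf_le hmem
      _ ≤ Fintype.card (Fin (cliqueCoverNum G)) := Finset.card_le_card (Finset.subset_univ T) |>.trans (le_of_eq Finset.card_univ)
      _ = cliqueCoverNum G := Fintype.card_fin _
end

section
/- For any finite perfect graph G, the independence number, eternal domination number, and clique covering number of G are all equal. -/
open SimpleGraph

variable {V : Type*}

/-- The chromatic number (least number of colours of a proper colouring). -/
noncomputable def chromNum {α : Type*} (G : SimpleGraph α) : ℕ :=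
  sInf {k | Nonempty (G.Coloring (Fin k))}

/-- The clique number (largest size of a clique). -/
noncomputable def cliqueNumber {α : Type*} (G : SimpleGraph α) : ℕ :=
  sSup {k | ∃ t : Finset α, G.IsNClique k t}

/-- `G` is perfect: every induced subgraph has chromatic number equal to its
clique number. -/
def IsPerfect {α : Type*} (G : SimpleGraph α) : Prop :=
  ∀ s : Set α, chromNum (G.induce s) = cliqueNumber (G.induce s)

set_option linter.unusedSectionVars false
set_option maxHeartbeats 1000000

section Basics
variable {W W' : Type*} [Fintype W] (H : SimpleGraph W)

lemma chromNum_colorable : H.Colorable (chromNum H) :=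
  Nat.sInf_mem (⟨_, H.colorable_of_fintype⟩ : Set.Nonempty {k | H.Colorable k})

lemma chromNum_le {k : ℕ} (h : H.Colorable k) : chromNum H ≤ k :=
  Nat.sInf_le h

lemma le_chromNum {k : ℕ} (h : ∀ j, H.Colorable j → k ≤ j) : k ≤ chromNum H :=
  h _ (chromNum_colorable H)

lemma cliqueNumber_bddAbove : BddAbove {k | ∃ t : Finset W, H.IsNClique k t} := by
  refine ⟨Fintype.card W, fun k hk => ?_⟩
  obtain ⟨t, ht⟩ := hk
  rw [← ht.2]
  exact Finset.card_le_univ t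

lemma le_cliqueNumber {k : ℕ} {t : Finset W} (h : H.IsNClique k t) : k ≤ cliqueNumber H :=
  le_csSup (cliqueNumber_bddAbove H) ⟨t, h⟩

lemma exists_isNClique_cliqueNumber : ∃ t : Finset W, H.IsNClique (cliqueNumber H) t := by
  have hne : Set.Nonempty {k | ∃ t : Finset W, H.IsNClique k t} :=
    ⟨0, ∅, by simp [isNClique_iff, Set.Pairwise]⟩
  exact Nat.sSup_mem hne (cliqueNumber_bddAbove H)

lemma exists_isNClique_of_le {k : ℕ} (h : k ≤ cliqueNumber H) :
    ∃ t : Finset W, H.IsNClique k t := by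
  obtain ⟨t, ht⟩ := exists_isNClique_cliqueNumber H
  obtain ⟨u, hu, hcard⟩ := Finset.exists_subset_card_eq (ht.2 ▸ h)
  exact ⟨u, ⟨ht.1.subset (by exact_mod_cast hu), hcard⟩⟩

lemma cliqueNumber_pos (hW : Nonempty W) : 1 ≤ cliqueNumber H :=
  le_cliqueNumber H (t := {hW.some}) (by simp)

lemma chromNum_iso {W' : Type*} {H' : SimpleGraph W'} (e : H ≃g H') :
    chromNum H = chromNum H' := by
  have : ∀ k, H.Colorable k ↔ H'.Colorable k := fun k =>
    ⟨fun h => SimpleGraph.Colorable.of_hom e.symm.toEmbedding.toHom h, fun h => SimpleGraph.Colorable.of_hom e.toEmbedding.toHom h⟩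
  unfold chromNum
  congr 1
  ext k
  exact this k

lemma cliqueNumber_le_of_embedding {W' : Type*} [Fintype W'] {H' : SimpleGraph W'}
    (f : H ↪g H') : cliqueNumber H ≤ cliqueNumber H' := by
  obtain ⟨t, ht⟩ := exists_isNClique_cliqueNumber H
  refine le_cliqueNumber H' (t := t.map f.toEmbedding) ⟨?_, by simp [ht.2]⟩
  intro x hx y hy hxy
  simp only [Finset.coe_map, Set.mem_image, Finset.mem_coe] at hx hy
  obtain ⟨a, ha, rfl⟩ := hx
  obtain ⟨b, hb, rfl⟩ := hy
  have hab : a ≠ b := fun h => hxy (by rw [h])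
  exact f.map_adj_iff.2 (ht.1 ha hb hab)

lemma cliqueNumber_iso {W' : Type*} [Fintype W'] {H' : SimpleGraph W'} (e : H ≃g H') :
    cliqueNumber H = cliqueNumber H' :=
  le_antisymm (cliqueNumber_le_of_embedding H e.toEmbedding)
    (cliqueNumber_le_of_embedding H' e.symm.toEmbedding)

end Basics

section Glue
variable {W : Type*} (H : SimpleGraph W)

lemma compl_induce (s : Set W) : (Hᶜ).induce s = (H.induce s)ᶜ := by
  ext a b
  simp only [comap_adj, Function.Embedding.coe_subtype, compl_adj]
  constructor
  · rintro ⟨h1, h2⟩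
    exact ⟨fun h => h1 (by rw [h]), h2⟩
  · rintro ⟨h1, h2⟩
    exact ⟨fun h => h1 (Subtype.ext h), h2⟩

noncomputable def induceInduceIso (s : Set W) (t : Set ↥s) :
    (H.induce s).induce t ≃g H.induce (Subtype.val '' t) where
  toEquiv := (Equiv.Set.image Subtype.val t Subtype.val_injective).trans
      (Equiv.setCongr rfl)
  map_rel_iff' := by
    intro a b
    simp only [Equiv.trans_apply, Equiv.Set.image_apply, Equiv.setCongr_apply, comap_adj,
      Function.Embedding.coe_subtype]

def induceEmb (s : Set W) : H.induce s ↪g H where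
  toEmbedding := Function.Embedding.subtype _
  map_rel_iff' := Iff.rfl

lemma cliqueNumber_induce_le [Fintype W] (s : Set W) :
    cliqueNumber (H.induce s) ≤ cliqueNumber H := by
  haveI := Fintype.ofFinite ↥s
  exact cliqueNumber_le_of_embedding _ (induceEmb H s)

end Glue

section Gasparian

variable {W : Type*} [Fintype W] [DecidableEq W]

lemma gasparian (H : SimpleGraph W)
    (hmin : ∀ u : Set W, u ≠ Set.univ → chromNum (H.induce u) ≤ cliqueNumber (H.induce u))
    (hlt : cliqueNumber H < chromNum H) :
    cliqueNumber Hᶜ * cliqueNumber H + 1 ≤ Fintype.card W := by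
  classical
  set ω := cliqueNumber H with hωdef
  set α := cliqueNumber Hᶜ with hαdef
  have hWne : Nonempty W := by
    by_contra h
    rw [not_nonempty_iff] at h
    have : H.Colorable 0 := ⟨⟨fun v => (h.false v).elim, fun {v} => (h.false v).elim⟩⟩
    have := chromNum_le H this
    omega
  have hω1 : 1 ≤ ω := cliqueNumber_pos H hWne
  have hα1 : 1 ≤ α := cliqueNumber_pos Hᶜ hWne
  have hnocol : ¬ H.Colorable ω := fun h => absurd (chromNum_le H h) (by omega)
  -- key: every stable finset S admits an ω-clique disjoint from it
  have key : ∀ S : Finset W, (∀ x ∈ S, ∀ y ∈ S, ¬ H.Adj x y) →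
      ∃ K : Finset W, H.IsNClique ω K ∧ ∀ x ∈ K, x ∉ S := by
    intro S hS
    rcases S.eq_empty_or_nonempty with rfl | hSne
    · obtain ⟨K, hK⟩ := exists_isNClique_cliqueNumber H
      exact ⟨K, hK, by simp⟩
    · set u : Set W := {x | x ∉ S} with hu
      haveI := Fintype.ofFinite ↥u
      have hune : u ≠ Set.univ := by
        obtain ⟨x, hx⟩ := hSne
        intro h
        have hx2 : x ∈ u := h ▸ Set.mem_univ x
        exact hx2 hx
      have hχ : ω ≤ chromNum (H.induce u) := by
        set j := chromNum (H.induce u) with hj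
        obtain ⟨c⟩ := chromNum_colorable (H.induce u)
        by_contra hjo
        push_neg at hjo
        -- extend c to a (j+1)-coloring of H
        have hcol : H.Colorable (j + 1) := by
          refine ⟨⟨fun x => if h : x ∈ u then (c ⟨x, h⟩).castSucc else Fin.last j, ?_⟩⟩
          intro x y hadj
          by_cases hx : x ∈ u <;> by_cases hy : y ∈ u
          · simp only [dif_pos hx, dif_pos hy]
            have : (H.induce u).Adj ⟨x, hx⟩ ⟨y, hy⟩ := hadj
            have := c.valid this
            simpa [Fin.castSucc_inj] using this
          · simp only [dif_pos hx, dif_neg hy]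
            exact (Fin.castSucc_lt_last _).ne
          · simp only [dif_neg hx, dif_pos hy]
            exact (Fin.castSucc_lt_last _).ne'
          · exact absurd hadj (hS x (by simpa [hu] using hx) y (by simpa [hu] using hy))
        exact hnocol (hcol.mono (by omega))
      have hcl : ω ≤ cliqueNumber (H.induce u) := hχ.trans (hmin u hune)
      obtain ⟨K', hK'⟩ := exists_isNClique_of_le (H.induce u) hcl
      refine ⟨K'.map (Function.Embedding.subtype _), ⟨?_, by simp [hK'.2]⟩, ?_⟩
      · intro x hx y hy hxy
        simp only [Finset.coe_map, Set.mem_image, Finset.mem_coe,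
          Function.Embedding.coe_subtype] at hx hy
        obtain ⟨a, ha, rfl⟩ := hx
        obtain ⟨b, hb, rfl⟩ := hy
        have hab : a ≠ b := fun h => hxy (by rw [h])
        exact hK'.1 ha hb hab
      · intro x hx
        simp only [Finset.mem_map, Function.Embedding.coe_subtype] at hx
        obtain ⟨a, _, rfl⟩ := hx
        exact a.2
  -- maximum stable set t₀ of size α
  obtain ⟨t₀, ht₀⟩ := exists_isNClique_cliqueNumber Hᶜ
  have ht₀stable : ∀ x ∈ t₀, ∀ y ∈ t₀, ¬ H.Adj x y := by
    intro x hx y hy hadj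
    rcases eq_or_ne x y with rfl | hne
    · exact H.loopless.irrefl x hadj
    · have := ht₀.1 hx hy hne
      rw [compl_adj] at this
      exact this.2 hadj
  -- enumeration of t₀
  let e : Fin α ≃ ↥t₀ := (finCongr ht₀.2.symm).trans t₀.equivFin.symm
  let vf : Fin α → W := fun i => (e i : W)
  have hvmem : ∀ i, vf i ∈ t₀ := fun i => (e i).2
  have hvinj : Function.Injective vf := fun i j h => e.injective (Subtype.ext h)
  have hvsurj : ∀ x ∈ t₀, ∃ i, vf i = x := by
    intro x hx
    exact ⟨e.symm ⟨x, hx⟩, by simp [vf]⟩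
  -- colorings of H - (vf i)
  have hcol : ∀ i : Fin α, ∃ f : W → Fin ω,
      ∀ x y, x ≠ vf i → y ≠ vf i → H.Adj x y → f x ≠ f y := by
    intro i
    set u : Set W := {x | x ≠ vf i} with hu
    haveI := Fintype.ofFinite ↥u
    have hune : u ≠ Set.univ := by
      intro h
      have : vf i ∈ u := h ▸ Set.mem_univ _
      exact this rfl
    have h1 : chromNum (H.induce u) ≤ ω :=
      (hmin u hune).trans (cliqueNumber_induce_le H u)
    obtain ⟨c⟩ := (chromNum_colorable (H.induce u)).mono h1
    refine ⟨fun x => if h : x ≠ vf i then c ⟨x, h⟩ else ⟨0, hω1⟩, ?_⟩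
    intro x y hx hy hadj
    simp only [dif_pos hx, dif_pos hy]
    have : (H.induce u).Adj ⟨x, hx⟩ ⟨y, hy⟩ := hadj
    exact c.valid this
  choose f hf using hcol
  -- the αω+1 stable sets
  let S : Option (Fin α × Fin ω) → Finset W := fun p => match p with
    | none => t₀
    | some (i, j) => Finset.univ.filter (fun x => x ≠ vf i ∧ f i x = j)
  have hSstable : ∀ p, ∀ x ∈ S p, ∀ y ∈ S p, ¬ H.Adj x y := by
    rintro (_ | ⟨i, j⟩)
    · exact ht₀stable
    · intro x hx y hy hadj
      simp only [S, Finset.mem_filter] at hx hy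
      exact hf i x y hx.2.1 hy.2.1 hadj (by rw [hx.2.2, hy.2.2])
  -- cliques avoiding each stable set
  have hKex : ∀ p, ∃ K : Finset W, H.IsNClique ω K ∧ ∀ x ∈ K, x ∉ S p :=
    fun p => key _ (hSstable p)
  choose K hK1 hK2 using hKex
  -- an ω-clique avoiding v i meets every class (i, j)
  have meets_some : ∀ (K' : Finset W), H.IsNClique ω K' → ∀ i j, vf i ∉ K' →
      ∃ x ∈ K', x ∈ S (some (i, j)) := by
    intro K' hK' i j hvi
    have hinj : Set.InjOn (f i) ↑K' := by
      intro x hx y hy hxy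
      by_contra hne
      exact hf i x y (fun h => hvi (h ▸ hx)) (fun h => hvi (h ▸ hy))
        (hK'.1 hx hy hne) hxy
    have himg : K'.image (f i) = Finset.univ := by
      apply Finset.eq_univ_of_card
      rw [Finset.card_image_of_injOn hinj, hK'.2, Fintype.card_fin]
    have : j ∈ K'.image (f i) := himg ▸ Finset.mem_univ j
    obtain ⟨x, hx, hfx⟩ := Finset.mem_image.1 this
    refine ⟨x, hx, ?_⟩
    simp only [S, Finset.mem_filter]
    exact ⟨Finset.mem_univ x, fun h => hvi (h ▸ hx), hfx⟩
  -- an ω-clique misses at most one of the stable sets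
  have meets : ∀ (K' : Finset W), H.IsNClique ω K' → ∀ p q, p ≠ q →
      (∀ x ∈ K', x ∉ S p) → ∃ x ∈ K', x ∈ S q := by
    intro K' hK' p q hpq hmiss
    by_contra hq
    push_neg at hq
    -- both p and q are missed; derive False
    have hmiss2 : ∀ r : Option (Fin α × Fin ω), (∀ x ∈ K', x ∉ S r) → r = p ∨ r = q → True :=
      fun _ _ _ => trivial
    -- case analysis
    have hcases : ∀ (i : Fin α) (j : Fin ω), (∀ x ∈ K', x ∉ S (some (i,j))) → vf i ∈ K' := by
      intro i j hm
      by_contra hvi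
      obtain ⟨x, hx1, hx2⟩ := meets_some K' hK' i j hvi
      exact hm x hx1 hx2
    match p, q, hpq with
    | none, none, hpq => exact hpq rfl
    | none, some (i, j), _ =>
      -- K' misses t₀, so vf i ∉ K', so K' meets (i,j), contradiction
      have hvi : vf i ∉ K' := fun h => hmiss _ h (hvmem i)
      obtain ⟨x, hx1, hx2⟩ := meets_some K' hK' i j hvi
      exact hq x hx1 hx2
    | some (i, j), none, _ =>
      have hvi : vf i ∉ K' := fun h => hq _ h (hvmem i)
      obtain ⟨x, hx1, hx2⟩ := meets_some K' hK' i j hvi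
      exact hmiss x hx1 hx2
    | some (i, j), some (i', j'), hpq =>
      have hvi : vf i ∈ K' := hcases i j hmiss
      have hvi' : vf i' ∈ K' := hcases i' j' hq
      have hii : i = i' := by
        by_contra hii
        have hne : vf i ≠ vf i' := fun h => hii (hvinj h)
        have hadj := hK'.1 hvi hvi' hne
        exact ht₀stable _ (hvmem i) _ (hvmem i') hadj
      subst hii
      have hjj : j ≠ j' := by
        intro h
        exact hpq (by rw [h])
      -- counting: erase (vf i) K' has ω-1 elements, f i injective on it,
      -- image avoids j and j'
      set E := K'.erase (vf i) with hE
      have hEcard : E.card = ω - 1 := by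
        rw [hE, Finset.card_erase_of_mem hvi, hK'.2]
      have hinj : Set.InjOn (f i) ↑E := by
        intro x hx y hy hxy
        have hx' : x ∈ E := hx
        have hy' : y ∈ E := hy
        by_contra hne
        exact hf i x y (Finset.ne_of_mem_erase hx') (Finset.ne_of_mem_erase hy')
          (hK'.1 (Finset.mem_of_mem_erase hx') (Finset.mem_of_mem_erase hy') hne) hxy
      have himgsub : E.image (f i) ⊆ (Finset.univ.erase j).erase j' := by
        intro b hb
        obtain ⟨x, hx, rfl⟩ := Finset.mem_image.1 hb
        have hxK : x ∈ K' := Finset.mem_of_mem_erase hx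
        have hxv : x ≠ vf i := Finset.ne_of_mem_erase hx
        refine Finset.mem_erase.2 ⟨?_, Finset.mem_erase.2 ⟨?_, Finset.mem_univ _⟩⟩
        · intro h
          exact hq x hxK (by simp only [S, Finset.mem_filter]; exact ⟨Finset.mem_univ x, hxv, h⟩)
        · intro h
          exact hmiss x hxK (by simp only [S, Finset.mem_filter]; exact ⟨Finset.mem_univ x, hxv, h⟩)
      have h2ω : 2 ≤ ω := by
        have := Fintype.card_fin ω ▸ Fintype.one_lt_card_iff_nontrivial.2 ⟨j, j', hjj⟩
        omega
      have hc1 : (E.image (f i)).card = ω - 1 := by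
        rw [Finset.card_image_of_injOn hinj, hEcard]
      have hc2 : ((Finset.univ.erase j).erase j' : Finset (Fin ω)).card = ω - 2 := by
        rw [Finset.card_erase_of_mem (Finset.mem_erase.2 ⟨hjj.symm, Finset.mem_univ j'⟩),
          Finset.card_erase_of_mem (Finset.mem_univ j), Finset.card_univ, Fintype.card_fin]
        omega
      have := Finset.card_le_card himgsub
      omega
  -- intersection sizes
  have hcard1 : ∀ p q, p ≠ q → ((K q) ∩ (S p)).card = 1 := by
    intro p q hpq
    obtain ⟨x, hx1, hx2⟩ := meets (K q) (hK1 q) q p (Ne.symm hpq) (hK2 q)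
    refine le_antisymm ?_ (Finset.card_pos.2 ⟨x, Finset.mem_inter.2 ⟨hx1, hx2⟩⟩)
    rw [Finset.card_le_one]
    intro a ha b hb
    rw [Finset.mem_inter] at ha hb
    by_contra hne
    exact hSstable p a ha.2 b hb.2 ((hK1 q).1 ha.1 hb.1 hne)
  have hcard0 : ∀ p, ((K p) ∩ (S p)).card = 0 := by
    intro p
    rw [Finset.card_eq_zero, Finset.eq_empty_iff_forall_notMem]
    intro x hx
    rw [Finset.mem_inter] at hx
    exact hK2 p x hx.1 hx.2
  -- linear independence of indicator vectors of the S p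
  let vec : Option (Fin α × Fin ω) → (W → ℚ) := fun p w => if w ∈ S p then 1 else 0
  have hli : LinearIndependent ℚ vec := by
    rw [Fintype.linearIndependent_iff]
    intro g hg
    have hsum : ∀ q, (∑ p, g p) - g q = 0 := by
      intro q
      have h1 : ∑ w ∈ K q, (∑ p, g p • vec p) w = 0 := by
        rw [hg]; simp
      have h2 : ∑ w ∈ K q, (∑ p, g p • vec p) w
          = ∑ p, g p * (((K q) ∩ (S p)).card : ℚ) := by
        simp only [Finset.sum_apply, Pi.smul_apply, smul_eq_mul]
        rw [Finset.sum_comm]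
        congr 1
        ext p
        rw [← Finset.mul_sum]
        congr 1
        simp only [vec]
        rw [Finset.sum_ite_mem, Finset.sum_const, nsmul_eq_mul, mul_one]
      have h3 : ∑ p, g p * (((K q) ∩ (S p)).card : ℚ) = (∑ p, g p) - g q := by
        have hterm : ∀ p, g p * (((K q) ∩ (S p)).card : ℚ)
            = g p - (if p = q then g p else 0) := by
          intro p
          by_cases hpq : p = q
          · subst hpq
            rw [hcard0 p]
            simp
          · rw [hcard1 p q hpq]
            simp [hpq]
        rw [Finset.sum_congr rfl (fun p _ => hterm p), Finset.sum_sub_distrib,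
          Finset.sum_ite_eq' Finset.univ q g]
        simp
      rw [← h3, ← h2, h1]
    have hT : ∀ q, g q = ∑ p, g p := by
      intro q
      have := hsum q
      linarith
    have hTzero : (∑ p, g p) = 0 := by
      have hmN : Fintype.card (Option (Fin α × Fin ω)) = α * ω + 1 := by
        simp [Fintype.card_option, Fintype.card_prod]
      have h4 : (∑ p, g p) = (Fintype.card (Option (Fin α × Fin ω)) : ℚ) * (∑ p, g p) := by
        conv_lhs => rw [Finset.sum_congr rfl (fun p _ => hT p)]
        rw [Finset.sum_const, Finset.card_univ, nsmul_eq_mul]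
      rw [hmN] at h4
      have hcast : ((α * ω + 1 : ℕ) : ℚ) = ((α * ω : ℕ) : ℚ) + 1 := by push_cast; ring
      rw [hcast] at h4
      have h6 : ((α * ω : ℕ) : ℚ) * (∑ p, g p) = 0 := by linear_combination -h4
      have h7 : ((α * ω : ℕ) : ℚ) ≠ 0 := by
        simp only [ne_eq, Nat.cast_eq_zero]
        intro h
        rcases Nat.mul_eq_zero.1 h with h | h <;> omega
      exact (mul_eq_zero.1 h6).resolve_left h7
    intro p
    rw [hT p, hTzero]
  have hfin := hli.fintype_card_le_finrank
  rw [Module.finrank_pi] at hfin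
  simpa [Fintype.card_option, Fintype.card_prod] using hfin
end Gasparian


section Count
variable {W : Type*} [Fintype W] [DecidableEq W]

lemma card_le_cliqueNumber_compl_mul_chromNum (H : SimpleGraph W) :
    Fintype.card W ≤ cliqueNumber Hᶜ * chromNum H := by
  classical
  obtain ⟨c⟩ := chromNum_colorable H
  rw [← Finset.card_univ,
    Finset.card_eq_sum_card_fiberwise (f := c) (t := Finset.univ) (fun x _ => Finset.mem_univ _)]
  have hbound : ∀ j : Fin (chromNum H),
      (Finset.univ.filter (fun x => c x = j)).card ≤ cliqueNumber Hᶜ := by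
    intro j
    refine le_cliqueNumber Hᶜ (t := Finset.univ.filter (fun x => c x = j)) ⟨?_, rfl⟩
    intro x hx y hy hxy
    simp only [Finset.coe_filter, Set.mem_setOf_eq] at hx hy
    rw [compl_adj]
    refine ⟨hxy, fun hadj => c.valid hadj (by rw [hx.2, hy.2])⟩
  calc ∑ j : Fin (chromNum H), (Finset.univ.filter (fun x => c x = j)).card
      ≤ ∑ _j : Fin (chromNum H), cliqueNumber Hᶜ := Finset.sum_le_sum (fun j _ => hbound j)
    _ = cliqueNumber Hᶜ * chromNum H := by
        rw [Finset.sum_const, Finset.card_univ, Fintype.card_fin, smul_eq_mul, mul_comm]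

end Count

section WPGT

/-- For a perfect graph, the complement's chromatic number is at most the complement's
clique number (a consequence of the weak perfect graph theorem, proved via Gasparian's
argument). -/
lemma perfect_chromNum_compl_le {V : Type*} [Fintype V] [DecidableEq V] (G : SimpleGraph V)
    (hG : IsPerfect G) : chromNum Gᶜ ≤ cliqueNumber Gᶜ := by
  classical
  by_contra hcon
  push_neg at hcon
  set bad : Finset V → Prop :=
    fun s => cliqueNumber (Gᶜ.induce ↑s) < chromNum (Gᶜ.induce ↑s) with hbad
  haveI : DecidablePred bad := Classical.decPred bad
  have hbaduniv : bad Finset.univ := by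
    have e : Gᶜ.induce (↑(Finset.univ : Finset V)) ≃g Gᶜ := by
      have h : (↑(Finset.univ : Finset V) : Set V) = Set.univ := Finset.coe_univ
      rw [h]
      exact induceUnivIso Gᶜ
    haveI := Fintype.ofFinite ↥(↑(Finset.univ : Finset V) : Set V)
    show cliqueNumber (Gᶜ.induce (↑(Finset.univ : Finset V)))
      < chromNum (Gᶜ.induce (↑(Finset.univ : Finset V)))
    rw [chromNum_iso _ e, cliqueNumber_iso _ e]
    exact hcon
  set B : Finset (Finset V) := Finset.univ.filter bad with hB
  have hBne : B.Nonempty := ⟨Finset.univ, Finset.mem_filter.2 ⟨Finset.mem_univ _, hbaduniv⟩⟩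
  obtain ⟨s, hsB, hsmin⟩ := Finset.exists_min_image B Finset.card hBne
  have hbads : bad s := (Finset.mem_filter.1 hsB).2
  have hmin : ∀ u : Set ↥(↑s : Set V), u ≠ Set.univ →
      chromNum ((Gᶜ.induce (↑s : Set V)).induce u)
        ≤ cliqueNumber ((Gᶜ.induce (↑s : Set V)).induce u) := by
    intro u hune
    haveI := Fintype.ofFinite ↥u
    let t : Finset V := s.filter (fun v => ∃ h : v ∈ (↑s : Set V), (⟨v, h⟩ : ↥(↑s : Set V)) ∈ u)
    have hset : Subtype.val '' u = (↑t : Set V) := by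
      ext v
      constructor
      · rintro ⟨a, ha, rfl⟩
        refine Finset.mem_coe.2 (Finset.mem_filter.2 ⟨Finset.mem_coe.1 a.2, a.2, ?_⟩)
        simpa using ha
      · intro hv
        obtain ⟨hvs, hmem, hu⟩ := Finset.mem_filter.1 (Finset.mem_coe.1 hv)
        exact ⟨⟨v, hmem⟩, hu, rfl⟩
    have hts : t ⊂ s := by
      rw [Finset.ssubset_iff_of_subset (Finset.filter_subset _ _)]
      obtain ⟨a, hau⟩ := Set.ne_univ_iff_exists_notMem u |>.1 hune
      refine ⟨↑a, Finset.mem_coe.1 a.2, fun hat => ?_⟩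
      obtain ⟨_, hmem, hu⟩ := Finset.mem_filter.1 hat
      exact hau (by rwa [show (⟨↑a, hmem⟩ : ↥(↑s : Set V)) = a from Subtype.ext rfl] at hu)
    have htB : t ∉ B := by
      intro htB
      have := hsmin t htB
      have := Finset.card_lt_card hts
      omega
    have hnbad : ¬ bad t := fun h => htB (Finset.mem_filter.2 ⟨Finset.mem_univ _, h⟩)
    rw [hbad, not_lt] at hnbad
    have e2 : (Gᶜ.induce (↑s : Set V)).induce u ≃g Gᶜ.induce (↑t : Set V) := by
      have := induceInduceIso Gᶜ (↑s : Set V) u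
      rwa [hset] at this
    rw [chromNum_iso _ e2, cliqueNumber_iso _ e2]
    exact hnbad
  have hg := gasparian (Gᶜ.induce (↑s : Set V)) hmin hbads
  have hcompl : Gᶜ.induce (↑s : Set V) = (G.induce (↑s : Set V))ᶜ := compl_induce G _
  have hone : Fintype.card ↥(↑s : Set V)
      ≤ cliqueNumber (Gᶜ.induce (↑s : Set V)) * chromNum ((Gᶜ.induce (↑s : Set V))ᶜ) := by
    have h := card_le_cliqueNumber_compl_mul_chromNum ((Gᶜ.induce (↑s : Set V))ᶜ)
    rwa [compl_compl] at h
  have hchrom : chromNum ((Gᶜ.induce (↑s : Set V))ᶜ) = cliqueNumber ((Gᶜ.induce (↑s : Set V))ᶜ) := by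
    rw [hcompl, compl_compl]
    exact hG (↑s : Set V)
  rw [hchrom] at hone
  rw [mul_comm] at hone
  omega

end WPGT

section EternalDomination
variable {V : Type*} [Fintype V] [DecidableEq V]

lemma indepNum_le_of_EDFamily (G : SimpleGraph V) {k : ℕ} {F : Set (Finset V)}
    (hFne : F.Nonempty) (hcard : ∀ D ∈ F, D.card = k) (hED : IsEDFamily G F) :
    _root_.indepNum G ≤ k := by
  classical
  have main : ∀ (n : ℕ) (I : Finset V), (∀ x ∈ I, ∀ y ∈ I, ¬ G.Adj x y) →
      ∀ D ∈ F, (I \ D).card = n → ∃ D' ∈ F, I ⊆ D' := by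
    intro n
    induction n using Nat.strong_induction_on with
    | _ n ih =>
      intro I hI D hD hn
      rcases (I \ D).eq_empty_or_nonempty with he | ⟨v, hv⟩
      · exact ⟨D, hD, Finset.sdiff_eq_empty_iff_subset.1 he⟩
      · have hvI : v ∈ I := (Finset.mem_sdiff.1 hv).1
        have hvD : v ∉ D := (Finset.mem_sdiff.1 hv).2
        obtain ⟨u, huD, hadj, hmem⟩ := (hED D hD).2 v hvD
        set D' := insert v (D.erase u) with hD'
        have hsub : I \ D' ⊆ (I \ D).erase v := by
          intro w hw
          rw [Finset.mem_sdiff] at hw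
          obtain ⟨hwI, hwD'⟩ := hw
          have hwv : w ≠ v := fun h => hwD' (h ▸ Finset.mem_insert_self v _)
          refine Finset.mem_erase.2 ⟨hwv, Finset.mem_sdiff.2 ⟨hwI, fun hwD => ?_⟩⟩
          have hwu : w ≠ u := by
            intro h
            subst h
            exact hI w hwI v hvI hadj
          exact hwD' (Finset.mem_insert.2 (Or.inr (Finset.mem_erase.2 ⟨hwu, hwD⟩)))
        have hlt : (I \ D').card < n := by
          have h1 : ((I \ D).erase v).card < (I \ D).card := Finset.card_erase_lt_of_mem hv
          have h2 := Finset.card_le_card hsub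
          omega
        exact ih _ hlt I hI D' hmem rfl
  have hub : ∀ m ∈ {k | ∃ s : Finset V, s.card = k ∧ ∀ u ∈ s, ∀ v ∈ s, ¬ G.Adj u v}, m ≤ k := by
    rintro m ⟨I, rfl, hI⟩
    obtain ⟨D, hD⟩ := hFne
    obtain ⟨D', hD', hsub⟩ := main (I \ D).card I hI D hD rfl
    calc I.card ≤ D'.card := Finset.card_le_card hsub
      _ = k := hcard D' hD'
  exact csSup_le ⟨0, ∅, rfl, by simp⟩ hub

lemma exists_EDFamily_le_theta (G : SimpleGraph V) :
    ∃ k, (∃ F : Set (Finset V), F.Nonempty ∧ (∀ D ∈ F, D.card = k) ∧ IsEDFamily G F)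
      ∧ k ≤ chromNum Gᶜ := by
  classical
  obtain ⟨c⟩ := chromNum_colorable Gᶜ
  set colors : Finset (Fin (chromNum Gᶜ)) := Finset.univ.image c with hcolors
  set m := colors.card with hm
  set F : Set (Finset V) :=
    {D | (∀ x ∈ D, ∀ y ∈ D, c x = c y → x = y) ∧ ∀ j ∈ colors, ∃ x ∈ D, c x = j} with hF
  have hmemcolors : ∀ v : V, c v ∈ colors :=
    fun v => Finset.mem_image.2 ⟨v, Finset.mem_univ v, rfl⟩
  have hsame : ∀ x v : V, c x = c v → x = v ∨ G.Adj x v := by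
    intro x v hxv
    have hnadj : ¬ Gᶜ.Adj x v := fun hadj => c.valid hadj hxv
    simp only [compl_adj, not_and_or, not_not] at hnadj
    exact hnadj
  have hcardF : ∀ D ∈ F, D.card = m := by
    intro D hD
    obtain ⟨hinj, hsurj⟩ := hD
    have himg : D.image c = colors := by
      apply Finset.Subset.antisymm
      · intro j hj
        obtain ⟨x, _, rfl⟩ := Finset.mem_image.1 hj
        exact hmemcolors x
      · intro j hj
        obtain ⟨x, hx, hcx⟩ := hsurj j hj
        exact Finset.mem_image.2 ⟨x, hx, hcx⟩
    rw [hm, ← himg, Finset.card_image_of_injOn (fun x hx y hy h => hinj x hx y hy h)]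
  -- a canonical member of F
  have hpickex : ∀ j : {j // j ∈ colors}, ∃ a, c a = ↑j := by
    intro j
    obtain ⟨a, _, ha⟩ := Finset.mem_image.1 j.2
    exact ⟨a, ha⟩
  let pick : {j // j ∈ colors} → V := fun j => (hpickex j).choose
  have hpick : ∀ j : {j // j ∈ colors}, c (pick j) = ↑j := fun j => (hpickex j).choose_spec
  have hD₀ : colors.attach.image pick ∈ F := by
    constructor
    · intro x hx y hy hcxy
      obtain ⟨j₁, _, rfl⟩ := Finset.mem_image.1 hx
      obtain ⟨j₂, _, rfl⟩ := Finset.mem_image.1 hy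
      have hj : j₁ = j₂ := Subtype.ext (by rw [← hpick j₁, ← hpick j₂, hcxy])
      rw [hj]
    · intro j hj
      exact ⟨pick ⟨j, hj⟩, Finset.mem_image.2 ⟨⟨j, hj⟩, Finset.mem_attach _ _, rfl⟩, hpick _⟩
  have hED : IsEDFamily G F := by
    intro D hD
    obtain ⟨hinj, hsurj⟩ := hD
    constructor
    · -- dominating
      intro v
      obtain ⟨x, hxD, hcx⟩ := hsurj (c v) (hmemcolors v)
      exact ⟨x, hxD, hsame x v hcx⟩
    · -- defending
      intro v hvD
      obtain ⟨x, hxD, hcx⟩ := hsurj (c v) (hmemcolors v)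
      have hxv : x ≠ v := fun h => hvD (h ▸ hxD)
      have hadj : G.Adj x v := by
        rcases hsame x v hcx with h | h
        · exact absurd h hxv
        · exact h
      refine ⟨x, hxD, hadj, ?_, ?_⟩
      · -- injectivity on colors
        intro a ha b hb hab
        rw [Finset.mem_insert] at ha hb
        rcases ha with rfl | ha <;> rcases hb with rfl | hb
        · rfl
        · exfalso
          have hbD : b ∈ D := Finset.mem_of_mem_erase hb
          have : b = x := hinj b hbD x hxD (by rw [← hab, hcx])
          exact (Finset.mem_erase.1 hb).1 this
        · exfalso
          have haD : a ∈ D := Finset.mem_of_mem_erase ha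
          have : a = x := hinj a haD x hxD (by rw [hab, hcx])
          exact (Finset.mem_erase.1 ha).1 this
        · exact hinj a (Finset.mem_of_mem_erase ha) b (Finset.mem_of_mem_erase hb) hab
      · -- still covers every color
        intro j hj
        obtain ⟨y, hyD, hcy⟩ := hsurj j hj
        rcases eq_or_ne y x with rfl | hyx
        · exact ⟨v, Finset.mem_insert_self v _, by rw [← hcx, hcy]⟩
        · exact ⟨y, Finset.mem_insert.2 (Or.inr (Finset.mem_erase.2 ⟨hyx, hyD⟩)), hcy⟩
  refine ⟨m, ⟨F, ⟨_, hD₀⟩, hcardF, hED⟩, ?_⟩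
  calc m = colors.card := rfl
    _ ≤ (Finset.univ : Finset (Fin (chromNum Gᶜ))).card := Finset.card_le_univ _
    _ = chromNum Gᶜ := by rw [Finset.card_univ, Fintype.card_fin]

end EternalDomination

/-- For any finite perfect graph `G`, `α(G) = γ∞(G) = θ(G)`. -/
theorem perfect_indepNum_eq_eternalDomNum_eq_cliqueCoverNum {V : Type*} [Fintype V]
    [DecidableEq V] (G : SimpleGraph V) (hG : IsPerfect G) :
    _root_.indepNum G = eternalDomNum G ∧ eternalDomNum G = cliqueCoverNum G := by
  classical
  have hθ : cliqueCoverNum G = chromNum Gᶜ := rfl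
  have hα : _root_.indepNum G = cliqueNumber Gᶜ := by
    unfold _root_.indepNum cliqueNumber
    congr 1
    ext k
    constructor
    · rintro ⟨s, rfl, hs⟩
      refine ⟨s, ⟨?_, rfl⟩⟩
      intro x hx y hy hxy
      rw [compl_adj]
      exact ⟨hxy, hs x (Finset.mem_coe.1 hx) y (Finset.mem_coe.1 hy)⟩
    · rintro ⟨t, ht⟩
      refine ⟨t, ht.2, fun x hx y hy hadj => ?_⟩
      rcases eq_or_ne x y with rfl | hne
      · exact G.loopless.irrefl x hadj
      · have := ht.1 (Finset.mem_coe.2 hx) (Finset.mem_coe.2 hy) hne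
        rw [compl_adj] at this
        exact this.2 hadj
  obtain ⟨k, hkmem, hkle⟩ := exists_EDFamily_le_theta G
  have h1 : eternalDomNum G ≤ k := Nat.sInf_le hkmem
  have h2 : _root_.indepNum G ≤ eternalDomNum G := by
    have hmem := Nat.sInf_mem (⟨k, hkmem⟩ : Set.Nonempty
      {k | ∃ F : Set (Finset V), F.Nonempty ∧ (∀ D ∈ F, D.card = k) ∧ IsEDFamily G F})
    obtain ⟨F, hFne, hcard, hED⟩ := hmem
    exact indepNum_le_of_EDFamily G hFne hcard hED
  have h3 : chromNum Gᶜ ≤ cliqueNumber Gᶜ := perfect_chromNum_compl_le G hG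
  constructor <;> omega
end

section
/- If G is a finite graph with independence number 2, then the eternal domination number of G is at most 3. -/
open SimpleGraph

variable {V : Type*}

/-- If `G` is a finite graph with independence number `2`, then `γ∞(G) ≤ 3`. -/
theorem eternalDomNum_le_three_of_indepNum_two {V : Type*} [Fintype V] [DecidableEq V]
    (G : SimpleGraph V) (h : _root_.indepNum G = 2) :
    eternalDomNum G ≤ 3 := by
  classical
  set S : Set ℕ := {k | ∃ s : Finset V, s.card = k ∧ ∀ u ∈ s, ∀ v ∈ s, ¬ G.Adj u v} with hS
  have hbdd : BddAbove S := by
    refine ⟨Fintype.card V, fun k hk => ?_⟩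
    obtain ⟨s, hs, _⟩ := hk
    exact hs ▸ s.card_le_univ
  have hne : S.Nonempty := ⟨0, ∅, by simp, by simp⟩
  have h2 : 2 ∈ S := by
    have := Nat.sSup_mem hne hbdd
    rwa [show sSup S = 2 from h] at this
  obtain ⟨s, hs2, hsind⟩ := h2
  obtain ⟨x, y, hxy, rfl⟩ := Finset.card_eq_two.mp hs2
  have hxyadj : ¬ G.Adj x y := hsind x (by simp) y (by simp)
  -- no independent triple
  have hno3 : ∀ a b c : V, a ≠ b → a ≠ c → b ≠ c →
      ¬ G.Adj a b → ¬ G.Adj a c → ¬ G.Adj b c → False := by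
    intro a b c hab hac hbc h1 h2' h3
    have hmem : 3 ∈ S := by
      refine ⟨{a, b, c}, ?_, ?_⟩
      · rw [Finset.card_insert_of_notMem (by simp [hab, hac]),
          Finset.card_insert_of_notMem (by simp [hbc])]
        simp
      · intro u hu v hv
        simp only [Finset.mem_insert, Finset.mem_singleton] at hu hv
        rcases hu with rfl | rfl | rfl <;> rcases hv with rfl | rfl | rfl <;>
          first
            | exact G.irrefl
            | assumption
            | exact fun had => h1 had.symm
            | exact fun had => h2' had.symm
            | exact fun had => h3 had.symm
    have := le_csSup hbdd hmem
    rw [show sSup S = 2 from h] at this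
    omega
  by_cases hz : ∃ z : V, z ≠ x ∧ z ≠ y
  · -- use 3 guards
    obtain ⟨z, hzx, hzy⟩ := hz
    set F : Set (Finset V) :=
      {D | D.card = 3 ∧ ∃ a ∈ D, ∃ b ∈ D, a ≠ b ∧ ¬ G.Adj a b} with hF
    have h3mem : 3 ∈ {k | ∃ F : Set (Finset V), F.Nonempty ∧ (∀ D ∈ F, D.card = k) ∧
        IsEDFamily G F} := by
      refine ⟨F, ⟨{x, y, z}, ?_, x, by simp, y, by simp, hxy, hxyadj⟩,
        fun D hD => hD.1, ?_⟩
      · rw [Finset.card_insert_of_notMem (by simp [hxy, Ne.symm hzx]),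
          Finset.card_insert_of_notMem (by simp [Ne.symm hzy])]
        simp
      · rintro D ⟨hcard, a, ha, b, hb, hab, habadj⟩
        -- domination helper
        have hdom : ∀ v : V, v ∉ D → G.Adj a v ∨ G.Adj b v := by
          intro v hv
          by_contra hcon
          push_neg at hcon
          exact hno3 a b v hab (fun e => hv (e ▸ ha)) (fun e => hv (e ▸ hb))
            habadj hcon.1 hcon.2
        constructor
        · intro v
          by_cases hv : v ∈ D
          · exact ⟨v, hv, Or.inl rfl⟩
          · rcases hdom v hv with hav | hbv
            · exact ⟨a, ha, Or.inr hav⟩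
            · exact ⟨b, hb, Or.inr hbv⟩
        · intro v hv
          -- the third guard
          have hcd : ((D.erase a).erase b).card = 1 := by
            rw [Finset.card_erase_of_mem (Finset.mem_erase.mpr ⟨Ne.symm hab, hb⟩),
              Finset.card_erase_of_mem ha, hcard]
          obtain ⟨c, hc⟩ := Finset.card_eq_one.mp hcd
          have hc' : c ∈ (D.erase a).erase b := hc ▸ Finset.mem_singleton_self c
          have hcb : c ≠ b := (Finset.mem_erase.mp hc').1
          have hc'' : c ∈ D.erase a := Finset.mem_of_mem_erase hc'
          have hca : c ≠ a := (Finset.mem_erase.mp hc'').1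
          have hcD : c ∈ D := Finset.mem_of_mem_erase hc''
          have hcard' : ∀ u ∈ D, (insert v (D.erase u)).card = 3 := by
            intro u hu
            rw [Finset.card_insert_of_notMem (fun hmem =>
              hv (Finset.mem_of_mem_erase hmem)),
              Finset.card_erase_of_mem hu, hcard]
          by_cases hav : G.Adj a v
          · by_cases hbv : G.Adj b v
            · by_cases hcv : G.Adj c v
              · -- move c
                refine ⟨c, hcD, hcv, hcard' c hcD, a, ?_, b, ?_, hab, habadj⟩
                · exact Finset.mem_insert_of_mem (Finset.mem_erase.mpr ⟨Ne.symm hca, ha⟩)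
                · exact Finset.mem_insert_of_mem (Finset.mem_erase.mpr ⟨Ne.symm hcb, hb⟩)
              · -- move a; pair c, v
                refine ⟨a, ha, hav, hcard' a ha, c,
                  Finset.mem_insert_of_mem (Finset.mem_erase.mpr ⟨hca, hcD⟩),
                  v, Finset.mem_insert_self _ _, fun e => hv (e ▸ hcD), hcv⟩
            · -- move a; pair b, v
              refine ⟨a, ha, hav, hcard' a ha, b,
                Finset.mem_insert_of_mem (Finset.mem_erase.mpr ⟨Ne.symm hab, hb⟩),
                v, Finset.mem_insert_self _ _, fun e => hv (e ▸ hb), hbv⟩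
          · -- ¬ Adj a v, so Adj b v; move b; pair a, v
            have hbv : G.Adj b v := (hdom v hv).resolve_left hav
            refine ⟨b, hb, hbv, hcard' b hb, a,
              Finset.mem_insert_of_mem (Finset.mem_erase.mpr ⟨hab, ha⟩),
              v, Finset.mem_insert_self _ _, fun e => hv (e ▸ ha), hav⟩
    exact Nat.sInf_le h3mem
  · -- only two vertices
    push_neg at hz
    have hz' : ∀ z : V, z = x ∨ z = y := fun z => or_iff_not_imp_left.mpr (hz z)
    have h2mem : 2 ∈ {k | ∃ F : Set (Finset V), F.Nonempty ∧ (∀ D ∈ F, D.card = k) ∧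
        IsEDFamily G F} := by
      refine ⟨{({x, y} : Finset V)}, ⟨{x, y}, rfl⟩, ?_, ?_⟩
      · rintro D rfl
        exact Finset.card_pair hxy
      · rintro D rfl
        constructor
        · intro v
          exact ⟨v, by rcases hz' v with rfl | rfl <;> simp, Or.inl rfl⟩
        · intro v hv
          rcases hz' v with rfl | rfl <;> simp at hv
    exact le_trans (Nat.sInf_le h2mem) (by norm_num)
end

section
/- For any finite graph G with independence number α, the eternal domination number of G is at most α(α+1)/2 (the binomial coefficient C(α+1, 2)). -/
open SimpleGraph

variable {V : Type*}

section Aux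

variable [DecidableEq V] (G : SimpleGraph V)

/-- independent finset -/
def Indep (s : Finset V) : Prop := ∀ u ∈ s, ∀ v ∈ s, ¬ G.Adj u v

/-- A defensible family of configurations inside the vertex set `W`. -/
def ClosedOn (W : Finset V) (F : Set (Finset V)) : Prop :=
  ∀ D ∈ F, D ⊆ W ∧ (∀ v ∈ W, ∃ u ∈ D, u = v ∨ G.Adj u v) ∧
    ∀ v ∈ W, v ∉ D → ∃ u ∈ D, G.Adj u v ∧ insert v (D.erase u) ∈ F

/-- layered packing: disjoint independent sets of sizes `0,1,...,α` inside `W`. -/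
def PackOn (W : Finset V) (α : ℕ) (A : ℕ → Finset V) : Prop :=
  (∀ i ≤ α, A i ⊆ W ∧ Indep G (A i) ∧ (A i).card = i) ∧
  (∀ i ≤ α, ∀ j ≤ α, i ≠ j → Disjoint (A i) (A j))

variable {G}

lemma sum_Ico_choose : ∀ b c, c ≤ b →
    (∑ i ∈ Finset.Ico (c+1) (b+1), i) + (c+1).choose 2 = (b+1).choose 2 := by
  intro b
  induction b with
  | zero =>
    intro c hc
    interval_cases c
    simp
  | succ b ih =>
    intro c hc
    rcases Nat.lt_or_ge c (b+1) with h | h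
    · have hcb : c ≤ b := Nat.lt_succ_iff.mp h
      have h1 : c + 1 ≤ b + 1 := Nat.succ_le_succ hcb
      rw [Finset.sum_Ico_succ_top h1]
      have := ih c hcb
      have hch : (b+1+1).choose 2 = (b+1).choose 2 + (b+1) := by
        simp [Nat.choose_succ_succ, Nat.choose_one_right]
        omega
      omega
    · have : c = b + 1 := le_antisymm hc h
      subst this
      simp

lemma sum_range_id_choose (b : ℕ) : (∑ i ∈ Finset.range (b+1), i) = (b+1).choose 2 := by
  have h := sum_Ico_choose b 0 (Nat.zero_le _)
  have h0 : Finset.Ico 0 (b+1) = insert 0 (Finset.Ico 1 (b+1)) := by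
    ext x; simp; omega
  rw [Finset.range_eq_Ico, h0, Finset.sum_insert (by simp)] at *
  simpa using h


lemma closedOn_empty : ClosedOn G (∅ : Finset V) {(∅ : Finset V)} := by
  intro D hD
  rw [Set.mem_singleton_iff] at hD
  subst hD
  refine ⟨Finset.Subset.refl _, ?_, ?_⟩ <;> intro v hv <;> simp at hv

lemma closedOn_union {W S : Finset V} (hS : S ⊆ W) {F' : Set (Finset V)}
    (h' : ClosedOn G (W \ S) F') :
    ClosedOn G W ((fun D' => S ∪ D') '' F') := by
  rintro D ⟨D', hD', rfl⟩
  obtain ⟨hsub, hdom, hdef⟩ := h' D' hD'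
  have hD'W : D' ⊆ W \ S := hsub
  refine ⟨?_, ?_, ?_⟩
  · intro x hx
    rcases Finset.mem_union.mp hx with h | h
    · exact hS h
    · exact (Finset.mem_sdiff.mp (hD'W h)).1
  · intro v hv
    by_cases hvS : v ∈ S
    · exact ⟨v, Finset.mem_union_left _ hvS, Or.inl rfl⟩
    · obtain ⟨u, hu, h⟩ := hdom v (Finset.mem_sdiff.mpr ⟨hv, hvS⟩)
      exact ⟨u, Finset.mem_union_right _ hu, h⟩
  · intro v hv hvD
    have hvS : v ∉ S := fun h => hvD (Finset.mem_union_left _ h)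
    have hvD' : v ∉ D' := fun h => hvD (Finset.mem_union_right _ h)
    obtain ⟨u, hu, hadj, hmem⟩ := hdef v (Finset.mem_sdiff.mpr ⟨hv, hvS⟩) hvD'
    refine ⟨u, Finset.mem_union_right _ hu, hadj, ?_⟩
    have huS : u ∉ S := (Finset.mem_sdiff.mp (hD'W hu)).2
    have : insert v ((S ∪ D').erase u) = S ∪ insert v (D'.erase u) := by
      rw [Finset.erase_union_distrib, Finset.erase_eq_of_notMem huS,
        Finset.union_insert]
    rw [this]
    exact ⟨_, hmem, rfl⟩

lemma pack_card {W : Finset V} {α : ℕ} {A : ℕ → Finset V} (hA : PackOn G W α A) :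
    ((Finset.range (α+1)).biUnion A).card = (α+1).choose 2 := by
  rw [Finset.card_biUnion (fun x hx y hy hxy =>
    hA.2 x (Nat.lt_succ_iff.mp (Finset.mem_range.mp hx)) y
      (Nat.lt_succ_iff.mp (Finset.mem_range.mp hy)) hxy)]
  rw [Finset.sum_congr rfl (fun i hi =>
    (hA.1 i (Nat.lt_succ_iff.mp (Finset.mem_range.mp hi))).2.2)]
  exact sum_range_id_choose α

lemma pack_key {W : Finset V} {α : ℕ}
    (hb : ∀ s : Finset V, s ⊆ W → Indep G s → s.card ≤ α)
    {A : ℕ → Finset V} (hA : PackOn G W α A) {v : V} (hvW : v ∈ W)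
    (hvD : v ∉ (Finset.range (α+1)).biUnion A) :
    ∃ u ∈ A α, G.Adj u v := by
  by_contra h
  push_neg at h
  obtain ⟨hsub, hind, hcard⟩ := hA.1 α le_rfl
  have hvA : v ∉ A α := fun hx =>
    hvD (Finset.mem_biUnion.mpr ⟨α, Finset.self_mem_range_succ α, hx⟩)
  have hind' : Indep G (insert v (A α)) := by
    intro x hx y hy
    rcases Finset.mem_insert.mp hx with rfl | hx' <;>
      rcases Finset.mem_insert.mp hy with rfl | hy'
    · exact G.irrefl
    · exact fun hadj => h y hy' hadj.symm
    · exact fun hadj => h x hx' hadj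
    · exact hind x hx' y hy'
  have hle := hb _ (Finset.insert_subset hvW hsub) hind'
  rw [Finset.card_insert_of_notMem hvA, hcard] at hle
  omega

lemma cascade {W : Finset V} {α : ℕ}
    (hb : ∀ s : Finset V, s ⊆ W → Indep G s → s.card ≤ α)
    {A₀ : ℕ → Finset V} (h₀ : PackOn G W α A₀) :
    ∃ F : Set (Finset V), F.Nonempty ∧ (∀ D ∈ F, D.card = (α+1).choose 2) ∧
      ClosedOn G W F := by
  refine ⟨{D | ∃ A, PackOn G W α A ∧ D = (Finset.range (α+1)).biUnion A},
    ⟨_, A₀, h₀, rfl⟩, ?_, ?_⟩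
  · rintro D ⟨A, hA, rfl⟩
    exact pack_card hA
  · rintro D ⟨A, hA, rfl⟩
    have hin : ∀ i ≤ α, ∀ x ∈ A i, x ∈ (Finset.range (α+1)).biUnion A :=
      fun i hi x hxi =>
        Finset.mem_biUnion.mpr ⟨i, Finset.mem_range.mpr (Nat.lt_succ_of_le hi), hxi⟩
    refine ⟨?_, ?_, ?_⟩
    · intro x hx
      obtain ⟨i, hi, hxi⟩ := Finset.mem_biUnion.mp hx
      exact (hA.1 i (Nat.lt_succ_iff.mp (Finset.mem_range.mp hi))).1 hxi
    · intro v hvW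
      by_cases hvD : v ∈ (Finset.range (α+1)).biUnion A
      · exact ⟨v, hvD, Or.inl rfl⟩
      · obtain ⟨u, hu, hadj⟩ := pack_key hb hA hvW hvD
        exact ⟨u, hin α le_rfl u hu, Or.inr hadj⟩
    · intro v hvW hvD
      have hvA : ∀ i ≤ α, v ∉ A i := fun i hi hvi => hvD (hin i hi v hvi)
      have hMne : α ∈ {i | i ≤ α ∧ ∃ u ∈ A i, G.Adj u v} :=
        ⟨le_rfl, pack_key hb hA hvW hvD⟩
      set m := sInf {i | i ≤ α ∧ ∃ u ∈ A i, G.Adj u v} with hmdef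
      obtain ⟨hmα, u, huA, hadj⟩ : m ≤ α ∧ ∃ u ∈ A m, G.Adj u v :=
        Nat.sInf_mem ⟨α, hMne⟩
      have hmin : ∀ i, i < m → ¬∃ w ∈ A i, G.Adj w v := by
        intro i hi hex
        exact Nat.notMem_of_lt_sInf hi ⟨le_trans hi.le hmα, hex⟩
      have hm1 : 1 ≤ m := by
        rcases Nat.eq_zero_or_pos m with h0 | h
        · exfalso
          have h00 : A 0 = ∅ := Finset.card_eq_zero.mp (hA.1 0 (Nat.zero_le _)).2.2
          rw [h0, h00] at huA
          exact absurd huA (Finset.notMem_empty u)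
        · exact h
      have hne : m - 1 ≠ m := by omega
      have hm1α : m - 1 ≤ α := by omega
      have huD : ∀ i ≤ α, i ≠ m → u ∉ A i := fun i hi hiν hui =>
        Finset.disjoint_left.mp (hA.2 i hi m hmα hiν) hui huA
      set σ : ℕ → ℕ := fun i => if i = m then m - 1 else if i = m - 1 then m else i
        with hσdef
      have hσle : ∀ i ≤ α, σ i ≤ α := by
        intro i hi
        simp only [hσdef]
        split_ifs <;> omega
      have hσinj : ∀ i j, i ≠ j → σ i ≠ σ j := by
        intro i j hij
        simp only [hσdef]
        split_ifs <;> omega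
      set A' : ℕ → Finset V := fun i =>
        if i = m then insert v (A (m-1))
        else if i = m - 1 then (A m).erase u else A i with hA'def
      have hA'm : A' m = insert v (A (m-1)) := by simp [hA'def]
      have hA'm1 : A' (m-1) = (A m).erase u := by simp [hA'def, hne]
      have hA'other : ∀ i, i ≠ m → i ≠ m - 1 → A' i = A i := by
        intro i h1 h2; simp [hA'def, h1, h2]
      have hsub : ∀ i, ∀ x ∈ A' i, (i = m ∧ x = v) ∨ x ∈ A (σ i) := by
        intro i x hx
        by_cases h1 : i = m
        · subst h1
          rw [hA'm] at hx
          rcases Finset.mem_insert.mp hx with rfl | hx'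
          · exact Or.inl ⟨rfl, rfl⟩
          · right
            simpa only [hσdef, if_pos rfl] using hx'
        · by_cases h2 : i = m - 1
          · subst h2
            rw [hA'm1] at hx
            right
            simpa only [hσdef, if_neg h1, if_pos rfl, ↓reduceIte] using Finset.mem_of_mem_erase hx
          · rw [hA'other i h1 h2] at hx
            right
            simpa only [hσdef, if_neg h1, if_neg h2] using hx
      have hPack : PackOn G W α A' := by
        constructor
        · intro i hi
          by_cases h1 : i = m
          · subst h1
            rw [hA'm]
            obtain ⟨hs, hind, hc⟩ := hA.1 (m-1) hm1α
            refine ⟨Finset.insert_subset hvW hs, ?_, ?_⟩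
            · intro x hx y hy
              have hnadj : ∀ w ∈ A (m-1), ¬ G.Adj w v := by
                intro w hw hadj'
                exact hmin (m-1) (by omega) ⟨w, hw, hadj'⟩
              rcases Finset.mem_insert.mp hx with rfl | hx' <;>
                rcases Finset.mem_insert.mp hy with rfl | hy'
              · exact G.irrefl
              · exact fun hadj' => hnadj y hy' hadj'.symm
              · exact hnadj x hx'
              · exact hind x hx' y hy'
            · rw [Finset.card_insert_of_notMem (hvA (m-1) hm1α), hc]
              omega
          · by_cases h2 : i = m - 1
            · subst h2
              rw [hA'm1]
              obtain ⟨hs, hind, hc⟩ := hA.1 m hmα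
              refine ⟨(Finset.erase_subset u (A m)).trans hs,
                fun x hx y hy => hind x (Finset.mem_of_mem_erase hx) y
                  (Finset.mem_of_mem_erase hy), ?_⟩
              rw [Finset.card_erase_of_mem huA, hc]
            · rw [hA'other i h1 h2]
              exact hA.1 i hi
        · intro i hi j hj hij
          rw [Finset.disjoint_left]
          intro x hxi hxj
          rcases hsub i x hxi with ⟨him, rfl⟩ | hxi'
          · rcases hsub j x hxj with ⟨hjm, _⟩ | hxj'
            · exact hij (him.trans hjm.symm)
            · exact hvA (σ j) (hσle j hj) hxj'
          · rcases hsub j x hxj with ⟨hjm, rfl⟩ | hxj'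
            · exact hvA (σ i) (hσle i hi) hxi'
            · exact Finset.disjoint_left.mp
                (hA.2 (σ i) (hσle i hi) (σ j) (hσle j hj) (hσinj i j hij)) hxi' hxj'
      have hU : (Finset.range (α+1)).biUnion A'
          = insert v (((Finset.range (α+1)).biUnion A).erase u) := by
        ext x
        simp only [Finset.mem_biUnion, Finset.mem_range, Finset.mem_insert,
          Finset.mem_erase, Nat.lt_succ_iff]
        constructor
        · rintro ⟨i, hi, hx⟩
          rcases hsub i x hx with ⟨_, rfl⟩ | hx'
          · exact Or.inl rfl
          · right
            have hσi := hσle i hi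
            refine ⟨?_, σ i, hσi, hx'⟩
            intro hxu
            subst hxu
            by_cases hσm : σ i = m
            · -- σ i = m means i = m - 1; then x ∈ A m; but x ∈ A' (m-1) = erase u
              have him1 : i = m - 1 := by
                by_contra hc
                by_cases hc2 : i = m
                · subst hc2; simp only [hσdef, if_pos rfl] at hσm; omega
                · simp only [hσdef, if_neg hc2, if_neg hc] at hσm; exact hc2 hσm
              subst him1
              rw [hA'm1] at hx
              exact (Finset.mem_erase.mp hx).1 rfl
            · exact huD (σ i) hσi hσm hx'
        · rintro (rfl | ⟨hxu, i, hi, hx⟩)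
          · exact ⟨m, hmα, by rw [hA'm]; exact Finset.mem_insert_self x _⟩
          · by_cases h1 : i = m
            · subst h1
              exact ⟨m - 1, hm1α, by rw [hA'm1]; exact Finset.mem_erase.mpr ⟨hxu, hx⟩⟩
            · by_cases h2 : i = m - 1
              · subst h2
                exact ⟨m, hmα, by rw [hA'm]; exact Finset.mem_insert_of_mem hx⟩
              · exact ⟨i, hi, by rw [hA'other i h1 h2]; exact hx⟩
      exact ⟨u, hin m hmα u huA, hadj, ⟨A', hPack, hU.symm⟩⟩

lemma closedOn_trivial : ClosedOn G (∅ : Finset V) {(∅ : Finset V)} := by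
  intro D hD
  rw [Set.mem_singleton_iff] at hD
  subst hD
  refine ⟨Finset.Subset.refl _, ?_, ?_⟩ <;> intro v hv <;> simp at hv

lemma main_lemma (G : SimpleGraph V) :
    ∀ (n : ℕ) (W : Finset V), W.card ≤ n → ∀ (a : ℕ),
      (∀ s : Finset V, s ⊆ W → Indep G s → s.card ≤ a) →
      ∃ (k : ℕ) (F : Set (Finset V)), k ≤ (a+1).choose 2 ∧ F.Nonempty ∧
        (∀ D ∈ F, D.card = k) ∧ ClosedOn G W F := by
  intro n
  induction n with
  | zero =>
    intro W hW a _
    have hWe : W = ∅ := Finset.card_eq_zero.mp (Nat.le_zero.mp hW)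
    subst hWe
    exact ⟨0, {∅}, Nat.zero_le _, ⟨∅, rfl⟩, by simp, closedOn_trivial⟩
  | succ n IH =>
    intro W hW a
    induction a with
    | zero =>
      intro hb
      have hWe : W = ∅ := by
        by_contra h
        obtain ⟨v, hv⟩ := Finset.nonempty_iff_ne_empty.mpr h
        have hsing : Indep G {v} := by
          intro x hx y hy
          rw [Finset.mem_singleton] at hx hy
          subst hx; subst hy
          exact G.irrefl
        have := hb {v} (Finset.singleton_subset_iff.mpr hv) hsing
        simp at this
      subst hWe
      exact ⟨0, {∅}, Nat.zero_le _, ⟨∅, rfl⟩, by simp, closedOn_trivial⟩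
    | succ a iha =>
      intro hb
      by_cases hsm : ∀ s : Finset V, s ⊆ W → Indep G s → s.card ≤ a
      · obtain ⟨k, F, hk, h1, h2, h3⟩ := iha hsm
        exact ⟨k, F, le_trans hk (Nat.choose_le_choose 2 (by omega)), h1, h2, h3⟩
      push_neg at hsm
      obtain ⟨T₀, hT₀W, hT₀i, hT₀c⟩ := hsm
      have hT₀c' : T₀.card = a + 1 := le_antisymm (hb T₀ hT₀W hT₀i) hT₀c
      set α := a + 1 with hαdef
      -- chains of disjoint independent sets of sizes j+1, ..., α
      set Ch : ℕ → Prop := fun j => ∃ A : ℕ → Finset V,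
        (∀ i, j < i → i ≤ α → (A i ⊆ W ∧ Indep G (A i) ∧ (A i).card = i)) ∧
        (∀ i, j < i → i ≤ α → ∀ i', j < i' → i' ≤ α → i ≠ i' → Disjoint (A i) (A i'))
        with hChdef
      have hCha : Ch a := by
        refine ⟨fun _ => T₀, ?_, ?_⟩
        · intro i h1 h2
          exact ⟨hT₀W, hT₀i, by show T₀.card = i; omega⟩
        · intro i h1 h2 i' h1' h2' hne
          omega
      set j0 := sInf {j | Ch j} with hj0def
      have hCne : Set.Nonempty {j | Ch j} := ⟨a, hCha⟩
      have hj0 : Ch j0 := Nat.sInf_mem hCne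
      have hj0a : j0 ≤ a := Nat.sInf_le (show a ∈ {j | Ch j} from hCha)
      obtain ⟨A, hA1, hA2⟩ := hj0
      rcases Nat.eq_zero_or_pos j0 with hz | hpos
      · -- full packing exists: use the cascade family
        rw [hz] at hA1 hA2
        set A' : ℕ → Finset V := fun i => if i = 0 then (∅ : Finset V) else A i
          with hA'def
        have hPack : PackOn G W α A' := by
          constructor
          · intro i hi
            by_cases h0 : i = 0
            · subst h0
              simp [hA'def]
              exact fun x hx y hy h => absurd hx (Finset.notMem_empty x)
            · rw [show A' i = A i by simp [hA'def, h0]]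
              exact hA1 i (Nat.pos_of_ne_zero h0) hi
          · intro i hi j hj hij
            by_cases h0 : i = 0
            · subst h0
              rw [show A' 0 = ∅ by simp [hA'def]]
              exact Finset.disjoint_empty_left _
            · by_cases h0' : j = 0
              · subst h0'
                rw [show A' 0 = ∅ by simp [hA'def]]
                exact Finset.disjoint_empty_right _
              · rw [show A' i = A i by simp [hA'def, h0],
                  show A' j = A j by simp [hA'def, h0']]
                exact hA2 i (Nat.pos_of_ne_zero h0) hi j (Nat.pos_of_ne_zero h0') hj hij
        obtain ⟨F, hFne, hFcard, hFclosed⟩ := cascade hb hPack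
        exact ⟨(α+1).choose 2, F, le_rfl, hFne, hFcard, hFclosed⟩
      · -- stuck: fix guards on S and recurse on W \ S
        set S := (Finset.Ico (j0+1) (α+1)).biUnion A with hSdef
        have hin : ∀ i, j0 < i → i ≤ α → ∀ x ∈ A i, x ∈ S := fun i h1 h2 x hx =>
          Finset.mem_biUnion.mpr ⟨i, Finset.mem_Ico.mpr ⟨by omega, by omega⟩, hx⟩
        have hSW : S ⊆ W := by
          intro x hx
          obtain ⟨i, hi, hxi⟩ := Finset.mem_biUnion.mp hx
          rw [Finset.mem_Ico] at hi
          exact (hA1 i (by omega) (by omega)).1 hxi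
        have hSne : S.Nonempty := by
          have hc := (hA1 α (by omega) le_rfl).2.2
          have : (A α).Nonempty := Finset.card_pos.mp (by omega)
          obtain ⟨x, hx⟩ := this
          exact ⟨x, hin α (by omega) le_rfl x hx⟩
        have hScard : S.card = ∑ i ∈ Finset.Ico (j0+1) (α+1), i := by
          rw [Finset.card_biUnion]
          · exact Finset.sum_congr rfl fun i hi => by
              rw [Finset.mem_Ico] at hi
              exact (hA1 i (by omega) (by omega)).2.2
          · intro x hx y hy hxy
            rw [Finset.mem_coe, Finset.mem_Ico] at hx hy
            exact hA2 x (by omega) (by omega) y (by omega) (by omega) hxy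
        have hb'' : ∀ s : Finset V, s ⊆ W \ S → Indep G s → s.card ≤ j0 - 1 := by
          by_contra h
          push_neg at h
          obtain ⟨s, hsW, hsi, hsc⟩ := h
          obtain ⟨t, hts, htc⟩ := Finset.exists_subset_card_eq (s := s) (n := j0) (by omega)
          have hCh' : Ch (j0 - 1) := by
            refine ⟨fun i => if i = j0 then t else A i, ?_, ?_⟩
            · intro i h1 h2
              dsimp only
              by_cases hij : i = j0
              · subst hij
                rw [if_pos rfl]
                refine ⟨(hts.trans hsW).trans (Finset.sdiff_subset),
                  fun x hx y hy => hsi x (hts hx) y (hts hy), htc⟩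
              · rw [if_neg hij]
                exact hA1 i (by omega) h2
            · intro i h1 h2 i' h1' h2' hne
              dsimp only
              have hdisjt : ∀ i'', j0 < i'' → i'' ≤ α → Disjoint t (A i'') := by
                intro i'' hi1 hi2
                rw [Finset.disjoint_left]
                intro x hxt hxA
                have hxS : x ∈ S := hin i'' hi1 hi2 x hxA
                have := hsW (hts hxt)
                rw [Finset.mem_sdiff] at this
                exact this.2 hxS
              by_cases hij : i = j0
              · subst hij
                rw [if_pos rfl, if_neg (by omega : i' ≠ j0)]
                exact hdisjt i' (by omega) h2'
              · by_cases hij' : i' = j0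
                · subst hij'
                  rw [if_pos rfl, if_neg hij]
                  exact (hdisjt i (by omega) h2).symm
                · rw [if_neg hij, if_neg hij']
                  exact hA2 i (by omega) h2 i' (by omega) h2' hne
          have := Nat.sInf_le (show (j0 - 1) ∈ {j | Ch j} from hCh')
          omega
        have hWS : (W \ S).card ≤ n := by
          have h1 : (W \ S).card = W.card - S.card := Finset.card_sdiff_of_subset hSW
          have h2 : 1 ≤ S.card := Finset.card_pos.mpr hSne
          omega
        obtain ⟨k', F', hk', hne', hcard', hclosed'⟩ := IH (W \ S) hWS (j0 - 1) hb''
        refine ⟨S.card + k', (fun D' => S ∪ D') '' F', ?_, ?_, ?_, closedOn_union hSW hclosed'⟩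
        · have hsum := sum_Ico_choose α j0 (by omega)
          have hj1 : j0 - 1 + 1 = j0 := by omega
          rw [hj1] at hk'
          have hmono : j0.choose 2 ≤ (j0+1).choose 2 := Nat.choose_le_choose 2 (by omega)
          omega
        · obtain ⟨D', hD'⟩ := hne'
          exact ⟨S ∪ D', D', hD', rfl⟩
        · rintro D ⟨D', hD', rfl⟩
          have hD'WS : D' ⊆ W \ S := (hclosed' D' hD').1
          have hdisj : Disjoint S D' := by
            rw [Finset.disjoint_right]
            intro x hx hxS
            have := hD'WS hx
            rw [Finset.mem_sdiff] at this
            exact this.2 hxS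
          rw [Finset.card_union_of_disjoint hdisj, hcard' D' hD']

end Aux

/-- For any finite graph `G`, `γ∞(G) ≤ C(α(G)+1, 2)`. -/
theorem eternalDomNum_le_choose {V : Type*} [Fintype V] [DecidableEq V]
    (G : SimpleGraph V) :
    eternalDomNum G ≤ (_root_.indepNum G + 1).choose 2 := by
  have hb : ∀ s : Finset V, s ⊆ Finset.univ → Indep G s → s.card ≤ _root_.indepNum G := by
    intro s _ hs
    apply le_csSup
    · refine ⟨Fintype.card V, ?_⟩
      rintro k ⟨t, htc, _⟩
      rw [← htc]
      exact Finset.card_le_univ t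
    · exact ⟨s, rfl, hs⟩
  obtain ⟨k, F, hk, hne, hcard, hclosed⟩ :=
    main_lemma G (Fintype.card V) Finset.univ (by rw [Finset.card_univ]) (_root_.indepNum G) hb
  have hmem : k ∈ {k | ∃ F : Set (Finset V), F.Nonempty ∧ (∀ D ∈ F, D.card = k) ∧
      IsEDFamily G F} := by
    refine ⟨F, hne, hcard, ?_⟩
    intro D hD
    obtain ⟨hsub, hdom, hdef⟩ := hclosed D hD
    exact ⟨fun v => hdom v (Finset.mem_univ v), fun v hv => hdef v (Finset.mem_univ v) hv⟩
  exact le_trans (Nat.sInf_le hmem) hk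
end

section
/- The eternal domination number of the 5-cycle C₅ is 3, while its independence number is 2; moreover, C₅ is the smallest graph (in number of vertices) whose independence number is strictly less than its eternal domination number. -/
open SimpleGraph

variable {V : Type*}

/-! ### Auxiliary machinery -/

set_option linter.unusedVariables false
set_option linter.unusedSectionVars false

instance IsDomSet.instDecidable [Fintype V] [DecidableEq V] (G : SimpleGraph V)
    [DecidableRel G.Adj] (D : Finset V) : Decidable (IsDomSet G D) :=
  inferInstanceAs (Decidable (∀ v : V, ∃ u ∈ D, u = v ∨ G.Adj u v))

section Helpers
variable [Fintype V] [DecidableEq V]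

lemma card_insert_erase {D : Finset V} {u v : V} (hu : u ∈ D) (hv : v ∉ D) :
    (insert v (D.erase u)).card = D.card := by
  rw [Finset.card_insert_of_notMem (fun h => hv (Finset.mem_of_mem_erase h)),
    Finset.card_erase_of_mem hu, Nat.sub_add_cancel (Finset.card_pos.2 ⟨u, hu⟩)]

lemma edn_le (G : SimpleGraph V) (k : ℕ)
    (h1 : ∃ D : Finset V, D.card = k ∧ IsDomSet G D)
    (h2 : ∀ D : Finset V, D.card = k → IsDomSet G D → ∀ v ∉ D,
      ∃ u ∈ D, G.Adj u v ∧ IsDomSet G (insert v (D.erase u))) :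
    eternalDomNum G ≤ k := by
  apply Nat.sInf_le
  refine ⟨{D | D.card = k ∧ IsDomSet G D}, ?_, fun D hD => hD.1, ?_⟩
  · obtain ⟨D, h⟩ := h1; exact ⟨D, h⟩
  · rintro D ⟨hcard, hdom⟩
    refine ⟨hdom, fun v hv => ?_⟩
    obtain ⟨u, hu, hadj, hdom'⟩ := h2 D hcard hdom v hv
    exact ⟨u, hu, hadj, (card_insert_erase hu hv).trans hcard, hdom'⟩

lemma edn_ge (G : SimpleGraph V) (k : ℕ)
    (H : ∀ m, m < k → ∀ D : Finset V, D.card = m → IsDomSet G D →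
      ∃ v ∉ D, ∀ u ∈ D, G.Adj u v → ¬ IsDomSet G (insert v (D.erase u))) :
    k ≤ eternalDomNum G := by
  by_contra hlt
  push_neg at hlt
  have hmem : eternalDomNum G ∈ {m | ∃ F : Set (Finset V), F.Nonempty ∧
      (∀ D ∈ F, D.card = m) ∧ IsEDFamily G F} := by
    apply Nat.sInf_mem
    refine ⟨Finset.univ.card, ⟨{Finset.univ}, Set.singleton_nonempty _,
      fun D hD => by rw [Set.mem_singleton_iff] at hD; rw [hD], ?_⟩⟩
    intro D hD
    simp only [Set.mem_singleton_iff] at hD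
    subst hD
    exact ⟨fun v => ⟨v, Finset.mem_univ v, Or.inl rfl⟩,
      fun v hv => absurd (Finset.mem_univ v) hv⟩
  obtain ⟨F, ⟨D₀, hD₀⟩, hcards, hedf⟩ := hmem
  obtain ⟨hdom, hmv⟩ := hedf D₀ hD₀
  obtain ⟨v, hv, hkill⟩ := H _ hlt D₀ (hcards D₀ hD₀) hdom
  obtain ⟨u, hu, hadj, hmem'⟩ := hmv v hv
  exact hkill u hu hadj (hedf _ hmem').1

lemma indep_ge (G : SimpleGraph V) (k : ℕ)
    (h : ∃ s : Finset V, s.card = k ∧ ∀ u ∈ s, ∀ v ∈ s, ¬ G.Adj u v) :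
    k ≤ _root_.indepNum G := by
  apply le_csSup
  · refine ⟨Fintype.card V, ?_⟩
    rintro m ⟨s, rfl, -⟩
    exact s.card_le_univ.trans_eq Finset.card_univ
  · exact h

lemma indep_le (G : SimpleGraph V) (k : ℕ)
    (h : ∀ s : Finset V, (∀ u ∈ s, ∀ v ∈ s, ¬ G.Adj u v) → s.card ≤ k) :
    _root_.indepNum G ≤ k := by
  have hne : {k | ∃ s : Finset V, s.card = k ∧ ∀ u ∈ s, ∀ v ∈ s, ¬ G.Adj u v}.Nonempty :=
    ⟨0, ⟨∅, rfl, by simp⟩⟩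
  apply csSup_le hne
  rintro m ⟨s, rfl, hs⟩
  exact h s hs

end Helpers

/-! ### Small graphs, encoded by boolean adjacency data -/

def mkGraph {n : ℕ} (f : Fin n → Fin n → Bool) : SimpleGraph (Fin n) where
  Adj a c := a ≠ c ∧ (f a c = true ∨ f c a = true)
  symm := ⟨fun a c h => ⟨Ne.symm h.1, h.2.symm⟩⟩
  loopless := ⟨fun a h => h.1 rfl⟩

instance {n : ℕ} (f : Fin n → Fin n → Bool) : DecidableRel (mkGraph f).Adj :=
  fun a c => inferInstanceAs (Decidable (a ≠ c ∧ (f a c = true ∨ f c a = true)))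

def KeyProp (n : ℕ) (f : Fin n → Fin n → Bool) : Prop :=
  ∃ k : Fin (n+1),
    (∃ s : Finset (Fin n), s.card = k.val ∧ ∀ u ∈ s, ∀ v ∈ s, ¬ (mkGraph f).Adj u v) ∧
    (∃ D : Finset (Fin n), D.card = k.val ∧ IsDomSet (mkGraph f) D) ∧
    (∀ D : Finset (Fin n), D.card = k.val → IsDomSet (mkGraph f) D → ∀ v ∉ D,
      ∃ u ∈ D, (mkGraph f).Adj u v ∧ IsDomSet (mkGraph f) (insert v (D.erase u)))

set_option synthInstance.maxSize 4000 in
set_option synthInstance.maxHeartbeats 1000000 in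
instance KeyProp.instDecidable (n : ℕ) (f : Fin n → Fin n → Bool) : Decidable (KeyProp n f) := by
  unfold KeyProp; infer_instance

def f2 (b0 : Bool) : Fin 2 → Fin 2 → Bool := fun i j =>
  match i.val, j.val with
  | 0, 1 => b0
  | _, _ => false

def f3 (b0 b1 b2 : Bool) : Fin 3 → Fin 3 → Bool := fun i j =>
  match i.val, j.val with
  | 0, 1 => b0
  | 0, 2 => b1
  | 1, 2 => b2
  | _, _ => false

def f4 (b0 b1 b2 b3 b4 b5 : Bool) : Fin 4 → Fin 4 → Bool := fun i j =>
  match i.val, j.val with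
  | 0, 1 => b0
  | 0, 2 => b1
  | 0, 3 => b2
  | 1, 2 => b3
  | 1, 3 => b4
  | 2, 3 => b5
  | _, _ => false

lemma bridge0 (G : SimpleGraph (Fin 0)) : mkGraph (fun _ _ => false) = G :=
  Subsingleton.elim _ _

lemma bridge1 (G : SimpleGraph (Fin 1)) : mkGraph (fun _ _ => false) = G :=
  Subsingleton.elim _ _

open Classical in
lemma bridge2 (G : SimpleGraph (Fin 2)) : ∃ b0, mkGraph (f2 b0) = G := by
  refine ⟨decide (G.Adj 0 1), ?_⟩
  ext a c
  fin_cases a <;> fin_cases c <;>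
    simp [mkGraph, f2, decide_eq_true_eq] <;>
    first
      | exact fun h => G.loopless _ h
      | rw [G.adj_comm]

open Classical in
lemma bridge3 (G : SimpleGraph (Fin 3)) : ∃ b0 b1 b2, mkGraph (f3 b0 b1 b2) = G := by
  refine ⟨decide (G.Adj 0 1), decide (G.Adj 0 2), decide (G.Adj 1 2), ?_⟩
  ext a c
  fin_cases a <;> fin_cases c <;>
    simp [mkGraph, f3, decide_eq_true_eq] <;>
    first
      | exact fun h => G.loopless _ h
      | rw [G.adj_comm]

open Classical in
lemma bridge4 (G : SimpleGraph (Fin 4)) :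
    ∃ b0 b1 b2 b3 b4 b5, mkGraph (f4 b0 b1 b2 b3 b4 b5) = G := by
  refine ⟨decide (G.Adj 0 1), decide (G.Adj 0 2), decide (G.Adj 0 3),
    decide (G.Adj 1 2), decide (G.Adj 1 3), decide (G.Adj 2 3), ?_⟩
  ext a c
  fin_cases a <;> fin_cases c <;>
    simp [mkGraph, f4, decide_eq_true_eq] <;>
    first
      | exact fun h => G.loopless _ h
      | rw [G.adj_comm]

lemma key0 : KeyProp 0 (fun _ _ => false) := by decide
lemma key1 : KeyProp 1 (fun _ _ => false) := by decide
set_option maxRecDepth 100000 in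
lemma key2 : ∀ b0 : Bool, KeyProp 2 (f2 b0) := by decide
set_option maxRecDepth 100000 in
set_option maxHeartbeats 4000000 in
lemma key3 : ∀ b0 b1 b2 : Bool, KeyProp 3 (f3 b0 b1 b2) := by decide
set_option maxRecDepth 100000 in
set_option maxHeartbeats 40000000 in
lemma key4 : ∀ b0 b1 b2 b3 b4 b5 : Bool, KeyProp 4 (f4 b0 b1 b2 b3 b4 b5) := by decide

lemma part3core {n : ℕ} (hn : n < 5) (G : SimpleGraph (Fin n)) : ∃ k : ℕ,
    (∃ s : Finset (Fin n), s.card = k ∧ ∀ u ∈ s, ∀ v ∈ s, ¬ G.Adj u v) ∧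
    (∃ D : Finset (Fin n), D.card = k ∧ IsDomSet G D) ∧
    (∀ D : Finset (Fin n), D.card = k → IsDomSet G D → ∀ v ∉ D,
      ∃ u ∈ D, G.Adj u v ∧ IsDomSet G (insert v (D.erase u))) := by
  interval_cases n
  · have h := key0
    unfold KeyProp at h
    rw [bridge0 G] at h
    obtain ⟨k, h⟩ := h
    exact ⟨k.val, h⟩
  · have h := key1
    unfold KeyProp at h
    rw [bridge1 G] at h
    obtain ⟨k, h⟩ := h
    exact ⟨k.val, h⟩
  · obtain ⟨b0, rfl⟩ := bridge2 G
    obtain ⟨k, h⟩ := key2 b0; exact ⟨k.val, h⟩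
  · obtain ⟨b0, b1, b2, rfl⟩ := bridge3 G
    obtain ⟨k, h⟩ := key3 b0 b1 b2; exact ⟨k.val, h⟩
  · obtain ⟨b0, b1, b2, b3, b4, b5, rfl⟩ := bridge4 G
    obtain ⟨k, h⟩ := key4 b0 b1 b2 b3 b4 b5; exact ⟨k.val, h⟩

section Transfer
variable {W : Type*} [DecidableEq W] {n : ℕ} (G : SimpleGraph W) (e : W ≃ Fin n)

def pullGraph : SimpleGraph (Fin n) where
  Adj a c := G.Adj (e.symm a) (e.symm c)
  symm := ⟨fun a c h => G.adj_symm h⟩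
  loopless := ⟨fun a h => G.irrefl h⟩

lemma domset_push (S : Finset W) (h : IsDomSet G S) :
    IsDomSet (pullGraph G e) (S.image e) := by
  intro a
  obtain ⟨u, hu, hc⟩ := h (e.symm a)
  refine ⟨e u, Finset.mem_image_of_mem e hu, ?_⟩
  rcases hc with rfl | hadj
  · left; simp
  · right; simpa [pullGraph] using hadj

lemma domset_pull (S : Finset W) (h : IsDomSet (pullGraph G e) (S.image e)) :
    IsDomSet G S := by
  intro v
  obtain ⟨u', hu', hc⟩ := h (e v)
  obtain ⟨u, hu, rfl⟩ := Finset.mem_image.1 hu'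
  refine ⟨u, hu, ?_⟩
  rcases hc with heq | hadj
  · left; exact e.injective heq
  · right; simpa [pullGraph] using hadj

end Transfer

lemma part3 (W : Type) [Fintype W] [DecidableEq W] (G : SimpleGraph W)
    (hcard : Fintype.card W < 5) : eternalDomNum G ≤ _root_.indepNum G := by
  obtain ⟨k, ⟨s', hs'card, hs'ind⟩, ⟨D', hD'card, hD'dom⟩, hmove⟩ :=
    part3core hcard (pullGraph G (Fintype.equivFin W))
  set e := Fintype.equivFin W with he
  have hle1 : eternalDomNum G ≤ k := by
    apply edn_le
    · refine ⟨D'.image e.symm, ?_, ?_⟩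
      · rw [Finset.card_image_of_injective _ e.symm.injective]; exact hD'card
      · apply domset_pull G e
        have himg : (D'.image e.symm).image e = D' := by
          rw [Finset.image_image]; simp
        rw [himg]; exact hD'dom
    · intro D hDcard hdom v hv
      have h1 := domset_push G e D hdom
      have h2 : e v ∉ D.image e := by
        simp only [Finset.mem_image]
        rintro ⟨x, hx, hex⟩
        exact hv ((e.injective hex) ▸ hx)
      obtain ⟨u', hu', hadj, hdom2⟩ := hmove (D.image e)
        (by rw [Finset.card_image_of_injective _ e.injective]; exact hDcard) h1 (e v) h2
      obtain ⟨u, hu, rfl⟩ := Finset.mem_image.1 hu'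
      refine ⟨u, hu, ?_, ?_⟩
      · simpa [pullGraph] using hadj
      · apply domset_pull G e
        have himg : (insert v (D.erase u)).image e = insert (e v) ((D.image e).erase (e u)) := by
          rw [Finset.image_insert, Finset.image_erase e.injective]
        rw [himg]; exact hdom2
  have hle2 : k ≤ _root_.indepNum G := by
    apply indep_ge
    refine ⟨s'.image e.symm, ?_, ?_⟩
    · rw [Finset.card_image_of_injective _ e.symm.injective]; exact hs'card
    · intro u hu v hv hadj
      obtain ⟨a, ha, rfl⟩ := Finset.mem_image.1 hu
      obtain ⟨c, hc, rfl⟩ := Finset.mem_image.1 hv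
      exact hs'ind a ha c hc (by simpa [pullGraph] using hadj)
  exact hle1.trans hle2

/-- `γ∞(C₅) = 3` while `α(C₅) = 2`, and `C₅` is a smallest graph (in number of
vertices) whose independence number is strictly less than its eternal domination
number. -/
theorem cycle5_eternalDomNum :
    eternalDomNum (SimpleGraph.cycleGraph 5) = 3 ∧
    _root_.indepNum (SimpleGraph.cycleGraph 5) = 2 ∧
    ∀ (W : Type) [Fintype W] [DecidableEq W] (G : SimpleGraph W),
      Fintype.card W < 5 → ¬ _root_.indepNum G < eternalDomNum G := by
  refine ⟨?_, ?_, ?_⟩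
  · refine le_antisymm (edn_le _ 3 (by decide) (by set_option synthInstance.maxSize 4000 in set_option synthInstance.maxHeartbeats 1000000 in decide)) (edn_ge _ 3 ?_)
    intro m hm
    interval_cases m <;> set_option synthInstance.maxSize 4000 in set_option synthInstance.maxHeartbeats 1000000 in decide
  · exact le_antisymm (indep_le _ 2 (by decide)) (indep_ge _ 2 (by decide))
  · intro W _ _ G hcard
    exact not_lt.mpr (part3 W G hcard)
end

section
/- Let G be a triangle-free graph on n vertices with eternal domination number strictly less than its clique covering number and with clique covering number equal to ⌈n/2⌉. Then the bow tie product G ⋈ K₂ has eternal domination number strictly less than its clique covering number. -/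
open SimpleGraph

variable {V : Type*}

/-- The bow tie product `G ⋈ H`: `(v,w)` is adjacent to `(v',w')` iff
`v v' ∈ E(G)` and (`w = w'` or `w w' ∈ E(H)`). -/
def bowtie {α β : Type*} (G : SimpleGraph α) (H : SimpleGraph β) : SimpleGraph (α × β) where
  Adj p q := G.Adj p.1 q.1 ∧ (p.2 = q.2 ∨ H.Adj p.2 q.2)
  symm := ⟨by
    rintro p q ⟨h1, h2⟩
    exact ⟨h1.symm, by cases h2 with
      | inl h => exact Or.inl h.symm
      | inr h => exact Or.inr h.symm⟩⟩
  loopless := ⟨fun p h => G.irrefl h.1⟩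


section AuxLemmas

open Finset

lemma bowtie_adj' {α β : Type*} (G : SimpleGraph α) (H : SimpleGraph β) (p q : α × β) :
    (bowtie G H).Adj p q ↔ G.Adj p.1 q.1 ∧ (p.2 = q.2 ∨ H.Adj p.2 q.2) := Iff.rfl

lemma bowtie_cliqueFree {α β : Type*} (G : SimpleGraph α) (H : SimpleGraph β)
    (htf : G.CliqueFree 3) : (bowtie G H).CliqueFree 3 := by
  classical
  intro s hs
  rw [is3Clique_iff] at hs
  obtain ⟨a, b, c, hab, hac, hbc, -⟩ := hs
  exact htf {a.1, b.1, c.1} (is3Clique_iff.2 ⟨a.1, b.1, c.1, hab.1, hac.1, hbc.1, rfl⟩)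

/-- In a triangle-free graph, the clique cover number is at least half the vertex count. -/
lemma le_cliqueCoverNum_of_cliqueFree {W : Type*} [Fintype W]
    (B : SimpleGraph W) (htf : B.CliqueFree 3) :
    (Fintype.card W + 1) / 2 ≤ cliqueCoverNum B := by
  classical
  have hne : ∃ k, Nonempty (Bᶜ.Coloring (Fin k)) := by
    refine ⟨Fintype.card W, ⟨Coloring.mk (Fintype.equivFin W) ?_⟩⟩
    intro v w h hvw
    exact h.ne ((Fintype.equivFin W).injective hvw)
  refine le_csInf hne ?_
  rintro k ⟨C⟩
  by_contra hk
  push_neg at hk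
  have hfib : ∀ i : Fin k, (Finset.univ.filter (fun w => C w = i)).card ≤ 2 := by
    intro i
    by_contra h2
    push_neg at h2
    obtain ⟨a, b, c, ha, hb, hc, hab, hac, hbc⟩ := Finset.two_lt_card_iff.1 h2
    simp only [Finset.mem_filter] at ha hb hc
    have hadj : ∀ x y : W, x ≠ y → C x = i → C y = i → B.Adj x y := by
      intro x y hxy hx hy
      by_contra hB
      exact C.valid ((B.compl_adj x y).2 ⟨hxy, hB⟩) (hx.trans hy.symm)
    exact htf {a, b, c} (is3Clique_iff.2 ⟨a, b, c,
      hadj a b hab ha.2 hb.2, hadj a c hac ha.2 hc.2, hadj b c hbc hb.2 hc.2, rfl⟩)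
  have hsum : Fintype.card W = ∑ i : Fin k, (Finset.univ.filter (fun w => C w = i)).card := by
    rw [← Finset.card_univ]
    exact Finset.card_eq_sum_card_fiberwise (fun x _ => Finset.mem_univ (C x))
  have h2k : Fintype.card W ≤ 2 * k := by
    rw [hsum]
    calc ∑ i : Fin k, (Finset.univ.filter (fun w => C w = i)).card
        ≤ ∑ _i : Fin k, 2 := Finset.sum_le_sum (fun i _ => hfib i)
      _ = 2 * k := by simp [mul_comm]
  omega

/-- The eternal domination number is attained by some family. -/
lemma eternalDomNum_spec {W : Type*} [Fintype W] [DecidableEq W] (B : SimpleGraph W) :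
    ∃ F : Set (Finset W), F.Nonempty ∧ (∀ D ∈ F, D.card = eternalDomNum B) ∧ IsEDFamily B F := by
  have hne : (Finset.univ : Finset W).card ∈
      {k | ∃ F : Set (Finset W), F.Nonempty ∧ (∀ D ∈ F, D.card = k) ∧ IsEDFamily B F} := by
    refine ⟨{Finset.univ}, ⟨Finset.univ, rfl⟩, ?_, ?_⟩
    · rintro D rfl; rfl
    · rintro D rfl
      exact ⟨fun v => ⟨v, Finset.mem_univ v, Or.inl rfl⟩,
        fun v hv => absurd (Finset.mem_univ v) hv⟩
  exact Nat.sInf_mem ⟨_, hne⟩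

lemma eternalDomNum_bowtie_le {W : Type*} [Fintype W] [DecidableEq W] (B : SimpleGraph W) :
    eternalDomNum (bowtie B (completeGraph (Fin 2))) ≤ 2 * eternalDomNum B := by
  obtain ⟨F, ⟨D₀', hD₀'⟩, hcard, hED⟩ := eternalDomNum_spec B
  set k := eternalDomNum B with hk
  -- the layer map
  let L : Fin 2 → Finset W → Finset (W × Fin 2) := fun i D => D.image (fun v => (v, i))
  have memL : ∀ i D v (j : Fin 2), (v, j) ∈ L i D ↔ v ∈ D ∧ j = i := by
    intro i D v j
    simp only [L, Finset.mem_image, Prod.mk.injEq]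
    constructor
    · rintro ⟨u, hu, rfl, rfl⟩; exact ⟨hu, rfl⟩
    · rintro ⟨hv, rfl⟩; exact ⟨v, hv, rfl, rfl⟩
  let F' : Set (Finset (W × Fin 2)) :=
    {S | ∃ D₀ ∈ F, ∃ D₁ ∈ F, S = L 0 D₀ ∪ L 1 D₁}
  refine Nat.sInf_le ⟨F', ⟨L 0 D₀' ∪ L 1 D₀', D₀', hD₀', D₀', hD₀', rfl⟩, ?_, ?_⟩
  · rintro S ⟨D₀, h₀, D₁, h₁, rfl⟩
    have hdisj : Disjoint (L 0 D₀) (L 1 D₁) := by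
      rw [Finset.disjoint_left]
      rintro ⟨v, j⟩ hj hj'
      rw [memL] at hj hj'
      exact absurd (hj.2 ▸ hj'.2) (by decide)
    rw [Finset.card_union_of_disjoint hdisj]
    have c0 : (L 0 D₀).card = k := by
      rw [Finset.card_image_of_injective _ (fun a b h => (Prod.mk.injEq _ _ _ _ ▸ h).1)]
      exact hcard D₀ h₀
    have c1 : (L 1 D₁).card = k := by
      rw [Finset.card_image_of_injective _ (fun a b h => (Prod.mk.injEq _ _ _ _ ▸ h).1)]
      exact hcard D₁ h₁
    rw [c0, c1]; ring
  · rintro S ⟨D₀, h₀, D₁, h₁, rfl⟩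
    obtain ⟨hdom₀, hmove₀⟩ := hED D₀ h₀
    obtain ⟨hdom₁, hmove₁⟩ := hED D₁ h₁
    constructor
    · rintro ⟨v, j⟩
      fin_cases j
      · obtain ⟨u, hu, huv⟩ := hdom₀ v
        refine ⟨(u, 0), Finset.mem_union_left _ ((memL 0 D₀ u 0).2 ⟨hu, rfl⟩), ?_⟩
        rcases huv with rfl | hadj
        · exact Or.inl rfl
        · exact Or.inr ⟨hadj, Or.inl rfl⟩
      · obtain ⟨u, hu, huv⟩ := hdom₁ v
        refine ⟨(u, 1), Finset.mem_union_right _ ((memL 1 D₁ u 1).2 ⟨hu, rfl⟩), ?_⟩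
        rcases huv with rfl | hadj
        · exact Or.inl rfl
        · exact Or.inr ⟨hadj, Or.inl rfl⟩
    · rintro ⟨v, j⟩ hv
      fin_cases j
      · have hv0 : v ∉ D₀ := fun h =>
          hv (Finset.mem_union_left _ ((memL 0 D₀ v 0).2 ⟨h, rfl⟩))
        obtain ⟨u, hu, hadj, hins⟩ := hmove₀ v hv0
        refine ⟨(u, 0), Finset.mem_union_left _ ((memL 0 D₀ u 0).2 ⟨hu, rfl⟩),
          ⟨hadj, Or.inl rfl⟩, insert v (D₀.erase u), hins, D₁, h₁, ?_⟩
        have hune : u ≠ v := hadj.ne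
        ext ⟨w, j⟩
        simp only [Finset.mem_insert, Finset.mem_erase, Finset.mem_union, memL,
          Prod.mk.injEq, ne_eq]
        fin_cases j <;> simp
      · have hv1 : v ∉ D₁ := fun h =>
          hv (Finset.mem_union_right _ ((memL 1 D₁ v 1).2 ⟨h, rfl⟩))
        obtain ⟨u, hu, hadj, hins⟩ := hmove₁ v hv1
        refine ⟨(u, 1), Finset.mem_union_right _ ((memL 1 D₁ u 1).2 ⟨hu, rfl⟩),
          ⟨hadj, Or.inl rfl⟩, D₀, h₀, insert v (D₁.erase u), hins, ?_⟩
        have hune : u ≠ v := hadj.ne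
        ext ⟨w, j⟩
        simp only [Finset.mem_insert, Finset.mem_erase, Finset.mem_union, memL,
          Prod.mk.injEq, ne_eq]
        fin_cases j <;> simp

end AuxLemmas

/-- If `G` is a triangle-free graph on `n` vertices with `γ∞(G) < θ(G) = ⌈n/2⌉`,
then `γ∞(G ⋈ K₂) < θ(G ⋈ K₂)`. -/
theorem bowtie_K2_eternalDomNum_lt_cliqueCoverNum {V : Type*} [Fintype V] [DecidableEq V]
    (G : SimpleGraph V) (htf : G.CliqueFree 3)
    (hlt : eternalDomNum G < cliqueCoverNum G)
    (hceil : cliqueCoverNum G = (Fintype.card V + 1) / 2) :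
    eternalDomNum (bowtie G (completeGraph (Fin 2))) <
      cliqueCoverNum (bowtie G (completeGraph (Fin 2))) := by
  have htf2 : (bowtie G (completeGraph (Fin 2))).CliqueFree 3 := bowtie_cliqueFree _ _ htf
  have hθ : (Fintype.card (V × Fin 2) + 1) / 2 ≤
      cliqueCoverNum (bowtie G (completeGraph (Fin 2))) :=
    le_cliqueCoverNum_of_cliqueFree _ htf2
  have hle : eternalDomNum (bowtie G (completeGraph (Fin 2))) ≤ 2 * eternalDomNum G :=
    eternalDomNum_bowtie_le G
  have hcardprod : Fintype.card (V × Fin 2) = 2 * Fintype.card V := by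
    simp [Fintype.card_prod, mul_comm]
  rw [hceil] at hlt
  rw [hcardprod] at hθ
  omega
end

section
/- For every integer k ≥ 2, there exists a graph G with γ(G) = γ∞(G) = k that contains a minimum dominating set which is not an eternal dominating set. -/
open SimpleGraph

variable {V : Type*}

/-- `D` is an eternal dominating set of `G`: guards placed on `D` can defend every
infinite sequence of attacks. -/
def IsEternalDomSet [DecidableEq V] (G : SimpleGraph V) (D : Finset V) : Prop :=
  ∃ F : Set (Finset V), IsEDFamily G F ∧ D ∈ F ∧ ∀ D' ∈ F, D'.card = D.card

open Finset

set_option maxHeartbeats 1000000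

def hadj (a b : ℕ) : Bool :=
  (a == 0 && b == 1) || (a == 1 && b == 0) || (a == 0 && b == 4) || (a == 4 && b == 0) ||
  (a == 1 && b == 2) || (a == 2 && b == 1) || (a == 1 && b == 4) || (a == 4 && b == 1) ||
  (a == 2 && b == 3) || (a == 3 && b == 2) || (a == 3 && b == 4) || (a == 4 && b == 3)

lemma hadj_iff (a b : ℕ) : hadj a b = true ↔
    (a = 0 ∧ b = 1) ∨ (a = 1 ∧ b = 0) ∨ (a = 0 ∧ b = 4) ∨ (a = 4 ∧ b = 0) ∨
    (a = 1 ∧ b = 2) ∨ (a = 2 ∧ b = 1) ∨ (a = 1 ∧ b = 4) ∨ (a = 4 ∧ b = 1) ∨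
    (a = 2 ∧ b = 3) ∨ (a = 3 ∧ b = 2) ∨ (a = 3 ∧ b = 4) ∨ (a = 4 ∧ b = 3) := by
  simp [hadj, Bool.or_eq_true, Bool.and_eq_true, beq_iff_eq, or_assoc]

lemma hadj_lt {a b : ℕ} (h : hadj a b = true) : a < 5 ∧ b < 5 := by
  rw [hadj_iff] at h; omega

lemma hadj_comm : ∀ a, a < 5 → ∀ b, b < 5 → hadj a b = hadj b a := by decide

def HG (m : ℕ) : SimpleGraph (Fin (m+5)) where
  Adj a b := hadj a.val b.val = true
  symm := by
    constructor
    intro a b h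
    have hlt := hadj_lt h
    rwa [hadj_comm _ hlt.1 _ hlt.2] at h
  loopless := by
    constructor
    intro a h
    rw [hadj_iff] at h
    omega

@[simp] lemma HG_adj {m : ℕ} (a b : Fin (m+5)) :
    (HG m).Adj a b ↔ hadj a.val b.val = true := Iff.rfl

def v0 (m : ℕ) : Fin (m+5) := ⟨0, by omega⟩
def v1 (m : ℕ) : Fin (m+5) := ⟨1, by omega⟩
def v2 (m : ℕ) : Fin (m+5) := ⟨2, by omega⟩
def v3 (m : ℕ) : Fin (m+5) := ⟨3, by omega⟩
def v4 (m : ℕ) : Fin (m+5) := ⟨4, by omega⟩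

@[simp] lemma v0_val (m : ℕ) : (v0 m).val = 0 := rfl
@[simp] lemma v1_val (m : ℕ) : (v1 m).val = 1 := rfl
@[simp] lemma v2_val (m : ℕ) : (v2 m).val = 2 := rfl
@[simp] lemma v3_val (m : ℕ) : (v3 m).val = 3 := rfl
@[simp] lemma v4_val (m : ℕ) : (v4 m).val = 4 := rfl

def IsoV (m : ℕ) : Finset (Fin (m+5)) := univ.filter (fun v => 5 ≤ v.val)

@[simp] lemma mem_IsoV {m : ℕ} {x : Fin (m+5)} : x ∈ IsoV m ↔ 5 ≤ x.val := by simp [IsoV]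

lemma card_IsoV (m : ℕ) : (IsoV m).card = m := by
  have h : IsoV m = (univ : Finset (Fin m)).map
      ⟨fun i => (⟨i.val + 5, by omega⟩ : Fin (m+5)), by
        intro a b h; simpa [Fin.ext_iff] using h⟩ := by
    ext x
    simp only [mem_IsoV, Finset.mem_map, Finset.mem_univ, true_and,
      Function.Embedding.coeFn_mk]
    constructor
    · intro h; exact ⟨⟨x.val - 5, by omega⟩, Fin.ext (show x.val - 5 + 5 = x.val by omega)⟩
    · rintro ⟨i, rfl⟩; show 5 ≤ i.val + 5; omega
  rw [h, Finset.card_map, Finset.card_univ, Fintype.card_fin]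

lemma card_pairU {m : ℕ} (a b : Fin (m+5)) (hab : a ≠ b) (ha : a.val < 5) (hb : b.val < 5) :
    ({a, b} ∪ IsoV m).card = m + 2 := by
  rw [Finset.card_union_of_disjoint, Finset.card_pair hab, card_IsoV]
  · omega
  · simp only [Finset.disjoint_left, Finset.mem_insert, Finset.mem_singleton]
    rintro x (rfl | rfl) hx <;> simp only [mem_IsoV] at hx <;> omega

lemma dom_of (m : ℕ) (a b : Fin (m+5))
    (h : ∀ i, i < 5 → a.val = i ∨ b.val = i ∨ hadj a.val i = true ∨ hadj b.val i = true) :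
    IsDomSet (HG m) ({a, b} ∪ IsoV m) := by
  intro x
  by_cases hx : 5 ≤ x.val
  · exact ⟨x, by simp [hx], Or.inl rfl⟩
  · rcases h x.val (by omega) with h | h | h | h
    · exact ⟨a, by simp, Or.inl (Fin.ext h)⟩
    · exact ⟨b, by simp, Or.inl (Fin.ext h)⟩
    · exact ⟨a, by simp, Or.inr h⟩
    · exact ⟨b, by simp, Or.inr h⟩

lemma dom_card {m : ℕ} {D : Finset (Fin (m+5))} (hD : IsDomSet (HG m) D) :
    m + 2 ≤ D.card := by
  have hIsub : IsoV m ⊆ D := by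
    intro x hx
    rw [mem_IsoV] at hx
    obtain ⟨u, hu, h⟩ := hD x
    rcases h with rfl | h
    · exact hu
    · exfalso; rw [HG_adj, hadj_iff] at h; omega
  obtain ⟨a, haD, ha⟩ := hD (v0 m)
  obtain ⟨b, hbD, hb⟩ := hD (v2 m)
  obtain ⟨c, hcD, hc⟩ := hD (v3 m)
  have hA : a.val = 0 ∨ a.val = 1 ∨ a.val = 4 := by
    rcases ha with rfl | h
    · left; rfl
    · rw [HG_adj, hadj_iff] at h; simp at h; omega
  have hB : b.val = 1 ∨ b.val = 2 ∨ b.val = 3 := by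
    rcases hb with rfl | h
    · right; left; rfl
    · rw [HG_adj, hadj_iff] at h; simp at h; omega
  have hC : c.val = 2 ∨ c.val = 3 ∨ c.val = 4 := by
    rcases hc with rfl | h
    · right; left; rfl
    · rw [HG_adj, hadj_iff] at h; simp at h; omega
  have key : ∃ x ∈ D, ∃ y ∈ D, x.val < 5 ∧ y.val < 5 ∧ x ≠ y := by
    by_cases hab : a = b
    · subst hab
      refine ⟨a, haD, c, hcD, by omega, by omega, ?_⟩
      simp only [ne_eq, Fin.ext_iff]; omega
    · exact ⟨a, haD, b, hbD, by omega, by omega, hab⟩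
  obtain ⟨x, hxD, y, hyD, hx5, hy5, hxy⟩ := key
  have hsub : insert x (insert y (IsoV m)) ⊆ D := by
    intro z hz
    simp only [Finset.mem_insert] at hz
    rcases hz with rfl | rfl | hz
    · exact hxD
    · exact hyD
    · exact hIsub hz
  have hcard : (insert x (insert y (IsoV m))).card = m + 2 := by
    rw [Finset.card_insert_of_notMem, Finset.card_insert_of_notMem, card_IsoV]
    · simp only [mem_IsoV]; omega
    · simp only [Finset.mem_insert, mem_IsoV, not_or]
      exact ⟨hxy, by omega⟩
  calc m + 2 = (insert x (insert y (IsoV m))).card := hcard.symm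
    _ ≤ D.card := Finset.card_le_card hsub

def F6 (m : ℕ) : Set (Finset (Fin (m+5))) :=
  { {v0 m, v2 m} ∪ IsoV m, {v0 m, v3 m} ∪ IsoV m, {v1 m, v2 m} ∪ IsoV m,
    {v1 m, v3 m} ∪ IsoV m, {v2 m, v4 m} ∪ IsoV m, {v3 m, v4 m} ∪ IsoV m }

lemma edf (m : ℕ) : IsEDFamily (HG m) (F6 m) := by
  intro D hD
  simp only [F6, Set.mem_insert_iff, Set.mem_singleton_iff] at hD
  rcases hD with rfl | rfl | rfl | rfl | rfl | rfl

  · refine ⟨dom_of m (v0 m) (v2 m) (by intro i hi; simp only [v0_val, v1_val, v2_val, v3_val, v4_val]; interval_cases i <;> decide), ?_⟩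
    intro x hx
    simp only [Finset.mem_union, Finset.mem_insert, Finset.mem_singleton, mem_IsoV,
      not_or, Fin.ext_iff, v0_val, v1_val, v2_val, v3_val, v4_val] at hx
    have hc : x = v1 m ∨ x = v3 m ∨ x = v4 m := by
      simp only [Fin.ext_iff, v0_val, v1_val, v2_val, v3_val, v4_val]
      omega
    rcases hc with rfl | rfl | rfl
    · refine ⟨v0 m, by simp, rfl, ?_⟩
      simp only [F6, Set.mem_insert_iff, Set.mem_singleton_iff]
      refine Or.inr (Or.inr (Or.inl ?_))
      ext y
      simp only [Finset.mem_insert, Finset.mem_erase, Finset.mem_union, Finset.mem_singleton,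
        mem_IsoV, ne_eq, Fin.ext_iff, v0_val, v1_val, v2_val, v3_val, v4_val]
      omega
    · refine ⟨v2 m, by simp, rfl, ?_⟩
      simp only [F6, Set.mem_insert_iff, Set.mem_singleton_iff]
      refine Or.inr (Or.inl ?_)
      ext y
      simp only [Finset.mem_insert, Finset.mem_erase, Finset.mem_union, Finset.mem_singleton,
        mem_IsoV, ne_eq, Fin.ext_iff, v0_val, v1_val, v2_val, v3_val, v4_val]
      omega
    · refine ⟨v0 m, by simp, rfl, ?_⟩
      simp only [F6, Set.mem_insert_iff, Set.mem_singleton_iff]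
      refine Or.inr (Or.inr (Or.inr (Or.inr (Or.inl ?_))))
      ext y
      simp only [Finset.mem_insert, Finset.mem_erase, Finset.mem_union, Finset.mem_singleton,
        mem_IsoV, ne_eq, Fin.ext_iff, v0_val, v1_val, v2_val, v3_val, v4_val]
      omega
  · refine ⟨dom_of m (v0 m) (v3 m) (by intro i hi; simp only [v0_val, v1_val, v2_val, v3_val, v4_val]; interval_cases i <;> decide), ?_⟩
    intro x hx
    simp only [Finset.mem_union, Finset.mem_insert, Finset.mem_singleton, mem_IsoV,
      not_or, Fin.ext_iff, v0_val, v1_val, v2_val, v3_val, v4_val] at hx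
    have hc : x = v1 m ∨ x = v2 m ∨ x = v4 m := by
      simp only [Fin.ext_iff, v0_val, v1_val, v2_val, v3_val, v4_val]
      omega
    rcases hc with rfl | rfl | rfl
    · refine ⟨v0 m, by simp, rfl, ?_⟩
      simp only [F6, Set.mem_insert_iff, Set.mem_singleton_iff]
      refine Or.inr (Or.inr (Or.inr (Or.inl ?_)))
      ext y
      simp only [Finset.mem_insert, Finset.mem_erase, Finset.mem_union, Finset.mem_singleton,
        mem_IsoV, ne_eq, Fin.ext_iff, v0_val, v1_val, v2_val, v3_val, v4_val]
      omega
    · refine ⟨v3 m, by simp, rfl, ?_⟩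
      simp only [F6, Set.mem_insert_iff, Set.mem_singleton_iff]
      refine Or.inl ?_
      ext y
      simp only [Finset.mem_insert, Finset.mem_erase, Finset.mem_union, Finset.mem_singleton,
        mem_IsoV, ne_eq, Fin.ext_iff, v0_val, v1_val, v2_val, v3_val, v4_val]
      omega
    · refine ⟨v0 m, by simp, rfl, ?_⟩
      simp only [F6, Set.mem_insert_iff, Set.mem_singleton_iff]
      refine Or.inr (Or.inr (Or.inr (Or.inr (Or.inr (?_)))))
      ext y
      simp only [Finset.mem_insert, Finset.mem_erase, Finset.mem_union, Finset.mem_singleton,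
        mem_IsoV, ne_eq, Fin.ext_iff, v0_val, v1_val, v2_val, v3_val, v4_val]
      omega
  · refine ⟨dom_of m (v1 m) (v2 m) (by intro i hi; simp only [v0_val, v1_val, v2_val, v3_val, v4_val]; interval_cases i <;> decide), ?_⟩
    intro x hx
    simp only [Finset.mem_union, Finset.mem_insert, Finset.mem_singleton, mem_IsoV,
      not_or, Fin.ext_iff, v0_val, v1_val, v2_val, v3_val, v4_val] at hx
    have hc : x = v0 m ∨ x = v3 m ∨ x = v4 m := by
      simp only [Fin.ext_iff, v0_val, v1_val, v2_val, v3_val, v4_val]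
      omega
    rcases hc with rfl | rfl | rfl
    · refine ⟨v1 m, by simp, rfl, ?_⟩
      simp only [F6, Set.mem_insert_iff, Set.mem_singleton_iff]
      refine Or.inl ?_
      ext y
      simp only [Finset.mem_insert, Finset.mem_erase, Finset.mem_union, Finset.mem_singleton,
        mem_IsoV, ne_eq, Fin.ext_iff, v0_val, v1_val, v2_val, v3_val, v4_val]
      omega
    · refine ⟨v2 m, by simp, rfl, ?_⟩
      simp only [F6, Set.mem_insert_iff, Set.mem_singleton_iff]
      refine Or.inr (Or.inr (Or.inr (Or.inl ?_)))
      ext y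
      simp only [Finset.mem_insert, Finset.mem_erase, Finset.mem_union, Finset.mem_singleton,
        mem_IsoV, ne_eq, Fin.ext_iff, v0_val, v1_val, v2_val, v3_val, v4_val]
      omega
    · refine ⟨v1 m, by simp, rfl, ?_⟩
      simp only [F6, Set.mem_insert_iff, Set.mem_singleton_iff]
      refine Or.inr (Or.inr (Or.inr (Or.inr (Or.inl ?_))))
      ext y
      simp only [Finset.mem_insert, Finset.mem_erase, Finset.mem_union, Finset.mem_singleton,
        mem_IsoV, ne_eq, Fin.ext_iff, v0_val, v1_val, v2_val, v3_val, v4_val]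
      omega
  · refine ⟨dom_of m (v1 m) (v3 m) (by intro i hi; simp only [v0_val, v1_val, v2_val, v3_val, v4_val]; interval_cases i <;> decide), ?_⟩
    intro x hx
    simp only [Finset.mem_union, Finset.mem_insert, Finset.mem_singleton, mem_IsoV,
      not_or, Fin.ext_iff, v0_val, v1_val, v2_val, v3_val, v4_val] at hx
    have hc : x = v0 m ∨ x = v2 m ∨ x = v4 m := by
      simp only [Fin.ext_iff, v0_val, v1_val, v2_val, v3_val, v4_val]
      omega
    rcases hc with rfl | rfl | rfl
    · refine ⟨v1 m, by simp, rfl, ?_⟩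
      simp only [F6, Set.mem_insert_iff, Set.mem_singleton_iff]
      refine Or.inr (Or.inl ?_)
      ext y
      simp only [Finset.mem_insert, Finset.mem_erase, Finset.mem_union, Finset.mem_singleton,
        mem_IsoV, ne_eq, Fin.ext_iff, v0_val, v1_val, v2_val, v3_val, v4_val]
      omega
    · refine ⟨v3 m, by simp, rfl, ?_⟩
      simp only [F6, Set.mem_insert_iff, Set.mem_singleton_iff]
      refine Or.inr (Or.inr (Or.inl ?_))
      ext y
      simp only [Finset.mem_insert, Finset.mem_erase, Finset.mem_union, Finset.mem_singleton,
        mem_IsoV, ne_eq, Fin.ext_iff, v0_val, v1_val, v2_val, v3_val, v4_val]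
      omega
    · refine ⟨v1 m, by simp, rfl, ?_⟩
      simp only [F6, Set.mem_insert_iff, Set.mem_singleton_iff]
      refine Or.inr (Or.inr (Or.inr (Or.inr (Or.inr (?_)))))
      ext y
      simp only [Finset.mem_insert, Finset.mem_erase, Finset.mem_union, Finset.mem_singleton,
        mem_IsoV, ne_eq, Fin.ext_iff, v0_val, v1_val, v2_val, v3_val, v4_val]
      omega
  · refine ⟨dom_of m (v2 m) (v4 m) (by intro i hi; simp only [v0_val, v1_val, v2_val, v3_val, v4_val]; interval_cases i <;> decide), ?_⟩
    intro x hx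
    simp only [Finset.mem_union, Finset.mem_insert, Finset.mem_singleton, mem_IsoV,
      not_or, Fin.ext_iff, v0_val, v1_val, v2_val, v3_val, v4_val] at hx
    have hc : x = v0 m ∨ x = v1 m ∨ x = v3 m := by
      simp only [Fin.ext_iff, v0_val, v1_val, v2_val, v3_val, v4_val]
      omega
    rcases hc with rfl | rfl | rfl
    · refine ⟨v4 m, by simp, rfl, ?_⟩
      simp only [F6, Set.mem_insert_iff, Set.mem_singleton_iff]
      refine Or.inl ?_
      ext y
      simp only [Finset.mem_insert, Finset.mem_erase, Finset.mem_union, Finset.mem_singleton,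
        mem_IsoV, ne_eq, Fin.ext_iff, v0_val, v1_val, v2_val, v3_val, v4_val]
      omega
    · refine ⟨v4 m, by simp, rfl, ?_⟩
      simp only [F6, Set.mem_insert_iff, Set.mem_singleton_iff]
      refine Or.inr (Or.inr (Or.inl ?_))
      ext y
      simp only [Finset.mem_insert, Finset.mem_erase, Finset.mem_union, Finset.mem_singleton,
        mem_IsoV, ne_eq, Fin.ext_iff, v0_val, v1_val, v2_val, v3_val, v4_val]
      omega
    · refine ⟨v2 m, by simp, rfl, ?_⟩
      simp only [F6, Set.mem_insert_iff, Set.mem_singleton_iff]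
      refine Or.inr (Or.inr (Or.inr (Or.inr (Or.inr (?_)))))
      ext y
      simp only [Finset.mem_insert, Finset.mem_erase, Finset.mem_union, Finset.mem_singleton,
        mem_IsoV, ne_eq, Fin.ext_iff, v0_val, v1_val, v2_val, v3_val, v4_val]
      omega
  · refine ⟨dom_of m (v3 m) (v4 m) (by intro i hi; simp only [v0_val, v1_val, v2_val, v3_val, v4_val]; interval_cases i <;> decide), ?_⟩
    intro x hx
    simp only [Finset.mem_union, Finset.mem_insert, Finset.mem_singleton, mem_IsoV,
      not_or, Fin.ext_iff, v0_val, v1_val, v2_val, v3_val, v4_val] at hx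
    have hc : x = v0 m ∨ x = v1 m ∨ x = v2 m := by
      simp only [Fin.ext_iff, v0_val, v1_val, v2_val, v3_val, v4_val]
      omega
    rcases hc with rfl | rfl | rfl
    · refine ⟨v4 m, by simp, rfl, ?_⟩
      simp only [F6, Set.mem_insert_iff, Set.mem_singleton_iff]
      refine Or.inr (Or.inl ?_)
      ext y
      simp only [Finset.mem_insert, Finset.mem_erase, Finset.mem_union, Finset.mem_singleton,
        mem_IsoV, ne_eq, Fin.ext_iff, v0_val, v1_val, v2_val, v3_val, v4_val]
      omega
    · refine ⟨v4 m, by simp, rfl, ?_⟩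
      simp only [F6, Set.mem_insert_iff, Set.mem_singleton_iff]
      refine Or.inr (Or.inr (Or.inr (Or.inl ?_)))
      ext y
      simp only [Finset.mem_insert, Finset.mem_erase, Finset.mem_union, Finset.mem_singleton,
        mem_IsoV, ne_eq, Fin.ext_iff, v0_val, v1_val, v2_val, v3_val, v4_val]
      omega
    · refine ⟨v3 m, by simp, rfl, ?_⟩
      simp only [F6, Set.mem_insert_iff, Set.mem_singleton_iff]
      refine Or.inr (Or.inr (Or.inr (Or.inr (Or.inl ?_))))
      ext y
      simp only [Finset.mem_insert, Finset.mem_erase, Finset.mem_union, Finset.mem_singleton,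
        mem_IsoV, ne_eq, Fin.ext_iff, v0_val, v1_val, v2_val, v3_val, v4_val]
      omega

lemma F6_cards (m : ℕ) : ∀ D ∈ F6 m, D.card = m + 2 := by
  intro D hD
  simp only [F6, Set.mem_insert_iff, Set.mem_singleton_iff] at hD
  rcases hD with rfl | rfl | rfl | rfl | rfl | rfl <;>
    exact card_pairU _ _ (by simp [Fin.ext_iff]) (by simp) (by simp)

/-- For every `k ≥ 2` there exists a graph `G` with `γ(G) = γ∞(G) = k` containing
a minimum dominating set which is not an eternal dominating set. -/
theorem exists_graph_min_dominating_not_eternal (k : ℕ) (hk : 2 ≤ k) :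
    ∃ (n : ℕ) (G : SimpleGraph (Fin n)),
      domNum G = k ∧ eternalDomNum G = k ∧
      ∃ D : Finset (Fin n), D.card = k ∧ IsDomSet G D ∧ ¬ IsEternalDomSet G D := by
  obtain ⟨m, rfl⟩ : ∃ m, k = m + 2 := ⟨k - 2, by omega⟩
  refine ⟨m + 5, HG m, ?_, ?_, ?_⟩
  · -- domNum = m + 2
    have hmem : (m + 2) ∈ {j | ∃ D : Finset (Fin (m+5)), D.card = j ∧ IsDomSet (HG m) D} :=
      ⟨{v1 m, v3 m} ∪ IsoV m,
        card_pairU _ _ (by simp [Fin.ext_iff]) (by simp) (by simp),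
        dom_of m (v1 m) (v3 m) (by intro i hi; simp only [v1_val, v3_val]; interval_cases i <;> decide)⟩
    refine le_antisymm (Nat.sInf_le hmem) (le_csInf ⟨_, hmem⟩ ?_)
    rintro j ⟨D, rfl, hD⟩
    exact dom_card hD
  · -- eternalDomNum = m + 2
    have hmem : (m + 2) ∈ {j | ∃ F : Set (Finset (Fin (m+5))),
        F.Nonempty ∧ (∀ D ∈ F, D.card = j) ∧ IsEDFamily (HG m) F} :=
      ⟨F6 m, ⟨{v0 m, v2 m} ∪ IsoV m, by left; rfl⟩, F6_cards m, edf m⟩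
    refine le_antisymm (Nat.sInf_le hmem) (le_csInf ⟨_, hmem⟩ ?_)
    rintro j ⟨F, ⟨D, hDF⟩, hcards, hEDF⟩
    rw [← hcards D hDF]
    exact dom_card (hEDF D hDF).1
  · -- the bad minimum dominating set
    refine ⟨{v1 m, v4 m} ∪ IsoV m,
      card_pairU _ _ (by simp [Fin.ext_iff]) (by simp) (by simp),
      dom_of m (v1 m) (v4 m) (by intro i hi; simp only [v1_val, v4_val]; interval_cases i <;> decide), ?_⟩
    rintro ⟨F, hF, hDF, -⟩
    obtain ⟨-, hdef⟩ := hF _ hDF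
    have h0 : v0 m ∉ ({v1 m, v4 m} ∪ IsoV m) := by
      simp [Fin.ext_iff]
    obtain ⟨g, hgD, hgadj, hnew⟩ := hdef (v0 m) h0
    have hg' := (hF _ hnew).1
    have hgval : g.val = 1 ∨ g.val = 4 := by
      rw [HG_adj, hadj_iff] at hgadj
      simp only [v0_val] at hgadj
      omega
    rcases hgval with hgval | hgval
    · -- new configuration is {v0, v4} ∪ IsoV; vertex v2 undominated
      obtain ⟨u, hu, h⟩ := hg' (v2 m)
      simp only [Finset.mem_insert, Finset.mem_erase, Finset.mem_union, Finset.mem_singleton,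
        mem_IsoV, ne_eq, Fin.ext_iff, v0_val, v1_val, v2_val, v4_val] at hu
      rcases h with h | h
      · rw [Fin.ext_iff] at h
        simp only [v2_val] at h
        omega
      · rw [HG_adj, hadj_iff] at h
        simp only [v2_val] at h
        omega
    · -- new configuration is {v0, v1} ∪ IsoV; vertex v3 undominated
      obtain ⟨u, hu, h⟩ := hg' (v3 m)
      simp only [Finset.mem_insert, Finset.mem_erase, Finset.mem_union, Finset.mem_singleton,
        mem_IsoV, ne_eq, Fin.ext_iff, v0_val, v1_val, v3_val, v4_val] at hu
      rcases h with h | h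
      · rw [Fin.ext_iff] at h
        simp only [v3_val] at h
        omega
      · rw [HG_adj, hadj_iff] at h
        simp only [v3_val] at h
        omega
end
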